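/- arXiv:2404.19724 — 7 statements merged into one kernel-verified Lean document; each statement's English description precedes it below -/
import Mathlib

section
/- Soundness of the rule of McIver, Morgan, Kaminski and Katoen: Let M be a finitely-branching MDP with absorbing terminal state ⊥ and initial state σ. Suppose there exist antitone functions p : (0,∞) → (0,1] and d : (0,∞) → (0,∞) (i.e., r₁ ≤ r₂ implies p(r₁) ≥ p(r₂) and d(r₁) ≥ d(r₂)) and a function V : S → ℝ such that V(⊥) = 0, V(s) > 0 for every s ∈ Reach(σ) with s ≠ ⊥, V is a supermartingale function on Reach(σ), and for every s ∈ Reach(σ) with s ≠ ⊥ and every action μ ∈ Act(s), μ({s' : V(s) − V(s') ≥ d(V(s))}) ≥ p(V(s)). Then M is almost surely terminating from σ. -/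
open scoped ENNReal Classical

/-- A finitely-branching MDP on a state space `S`: each state has a nonempty finite
set of available actions, each a finitely-supported PMF on `S`. -/
structure MDP (S : Type) where
  act : S → Finset (PMF S)
  act_nonempty : ∀ s, (act s).Nonempty
  act_finSupp : ∀ s, ∀ μ ∈ act s, (μ : PMF S).support.Finite

/-- A scheduler maps every history `(s₀, …, sₙ)` (given as the list of earlier
states `s₀, …, sₙ₋₁` together with the current state `sₙ`) to an available action. -/
structure Scheduler {S : Type} (M : MDP S) where
  choose : List S → S → PMF S
  choose_mem : ∀ hist s, choose hist s ∈ M.act s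

namespace MDP

variable {S : Type}

/-- Reachability: `s'` is reachable from `σ` via a finite path each of whose steps
lies in the support of some available action. -/
inductive Reach (M : MDP S) (σ : S) : S → Prop
  | refl : Reach M σ σ
  | step {s s' : S} (μ : PMF S) : Reach M σ s → μ ∈ M.act s → s' ∈ μ.support → Reach M σ s'

/-- Probability that the run (currently at `s`, with past history `hist`) visits the
set `T` within the next `k` steps, under scheduler `𝔰`. -/
noncomputable def hitProbAux (M : MDP S) (𝔰 : Scheduler M) (T : Set S) :
    ℕ → List S → S → ℝ≥0∞
  | 0, _, s => if s ∈ T then 1 else 0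
  | k + 1, hist, s =>
      if s ∈ T then 1
      else ∑' s', (𝔰.choose hist s) s' * hitProbAux M 𝔰 T k (hist ++ [s]) s'

/-- Probability that the run started at `σ` visits `T` within the first `k` steps. -/
noncomputable def hitProbWithin (M : MDP S) (𝔰 : Scheduler M) (σ : S) (T : Set S)
    (k : ℕ) : ℝ≥0∞ :=
  hitProbAux M 𝔰 T k [] σ

/-- Probability that the run started at `σ` ever visits `T`, under scheduler `𝔰`. -/
noncomputable def hitProb (M : MDP S) (𝔰 : Scheduler M) (σ : S) (T : Set S) : ℝ≥0∞ :=
  ⨆ k, hitProbWithin M 𝔰 σ T k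

/-- The terminal state `term` is absorbing: the only action there is the Dirac PMF. -/
def Absorbing (M : MDP S) (term : S) : Prop :=
  M.act term = {PMF.pure term}

/-- Termination probability: infimum over schedulers of the probability of visiting
the terminal state. -/
noncomputable def PrTerm (M : MDP S) (term σ : S) : ℝ≥0∞ :=
  ⨅ 𝔰 : Scheduler M, hitProb M 𝔰 σ {term}

/-- Almost-sure termination from `σ`. -/
def AST (M : MDP S) (term σ : S) : Prop := PrTerm M term σ = 1

/-- Mass a PMF assigns to a set. -/
noncomputable def mass (μ : PMF S) (A : Set S) : ℝ≥0∞ := ∑' a : A, μ a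

/-- Expected value of a real-valued function under a (finitely supported) PMF. -/
noncomputable def expect (μ : PMF S) (V : S → ℝ) : ℝ := ∑' s, (μ s).toReal * V s

/-- `V` is a supermartingale function on the states reachable from `σ`. -/
def SupermartingaleOn (M : MDP S) (σ : S) (V : S → ℝ) : Prop :=
  ∀ s, M.Reach σ s → ∀ μ ∈ M.act s, expect μ V ≤ V s

/-- `(Ψ, p)` is a stochastic invariant for initial state `σ`: under every scheduler the
probability that the run ever leaves `Ψ` is at most `p`. -/
def StochasticInvariant (M : MDP S) (σ : S) (Ψ : Set S) (p : ℝ) : Prop :=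
  ⨆ 𝔰 : Scheduler M, hitProb M 𝔰 σ Ψᶜ ≤ ENNReal.ofReal p

end MDP

section Aux

variable {S : Type}

lemma hitAux_le_one (M : MDP S) (𝔰 : Scheduler M) (T : Set S) :
    ∀ k hist s, MDP.hitProbAux M 𝔰 T k hist s ≤ 1 := by
  intro k
  induction k with
  | zero => intro hist s; rw [MDP.hitProbAux]; split <;> simp
  | succ k ih =>
    intro hist s
    rw [MDP.hitProbAux]
    split
    · exact le_refl 1
    · calc ∑' s', (𝔰.choose hist s) s' * MDP.hitProbAux M 𝔰 T k (hist ++ [s]) s'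
          ≤ ∑' s', (𝔰.choose hist s) s' * 1 :=
            ENNReal.tsum_le_tsum fun s' => mul_le_mul_right (ih _ _) _
        _ = 1 := by simp [(𝔰.choose hist s).tsum_coe]

lemma hitAux_of_mem (M : MDP S) (𝔰 : Scheduler M) (T : Set S)
    (k : ℕ) (hist : List S) (s : S) (hs : s ∈ T) :
    MDP.hitProbAux M 𝔰 T k hist s = 1 := by
  cases k <;> rw [MDP.hitProbAux] <;> exact if_pos hs

lemma reach_step (M : MDP S) (σ s s' : S) (h : M.Reach σ s) (μ : PMF S)
    (hμ : μ ∈ M.act s) (h' : μ s' ≠ 0) : M.Reach σ s' :=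
  MDP.Reach.step μ h hμ ((μ.mem_support_iff s').2 h')

/-- Subadditivity of hitting probabilities over unions. -/
lemma hitAux_union_le (M : MDP S) (𝔰 : Scheduler M) (T₁ T₂ : Set S) :
    ∀ k hist s, MDP.hitProbAux M 𝔰 (T₁ ∪ T₂) k hist s ≤
      MDP.hitProbAux M 𝔰 T₁ k hist s + MDP.hitProbAux M 𝔰 T₂ k hist s := by
  intro k
  induction k with
  | zero =>
    intro hist s
    by_cases h1 : s ∈ T₁
    · rw [hitAux_of_mem M 𝔰 T₁ 0 hist s h1,
        hitAux_of_mem M 𝔰 (T₁ ∪ T₂) 0 hist s (Or.inl h1)]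
      exact le_add_right (le_refl 1)
    · by_cases h2 : s ∈ T₂
      · rw [hitAux_of_mem M 𝔰 T₂ 0 hist s h2,
          hitAux_of_mem M 𝔰 (T₁ ∪ T₂) 0 hist s (Or.inr h2)]
        exact le_add_left (le_refl 1)
      · rw [MDP.hitProbAux, if_neg (fun h => h.elim h1 h2)]
        exact zero_le
  | succ k ih =>
    intro hist s
    by_cases h1 : s ∈ T₁
    · rw [hitAux_of_mem M 𝔰 T₁ (k+1) hist s h1]
      exact le_add_right (hitAux_le_one M 𝔰 _ _ _ _)
    · by_cases h2 : s ∈ T₂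
      · rw [hitAux_of_mem M 𝔰 T₂ (k+1) hist s h2]
        exact le_add_left (hitAux_le_one M 𝔰 _ _ _ _)
      · rw [MDP.hitProbAux, if_neg (fun h => h.elim h1 h2),
          MDP.hitProbAux, if_neg h1]
        conv_rhs => rw [MDP.hitProbAux, if_neg h2]
        rw [← ENNReal.tsum_add]
        refine ENNReal.tsum_le_tsum fun s' => ?_
        rw [← mul_add]
        exact mul_le_mul_right (ih _ _) _

/-- ENNReal version of the supermartingale property. -/
lemma tsum_ofReal_le (M : MDP S) (σ : S) (V : S → ℝ)
    (hVnn : ∀ s, M.Reach σ s → 0 ≤ V s)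
    (hVsm : M.SupermartingaleOn σ V)
    (s : S) (hs : M.Reach σ s) (μ : PMF S) (hμ : μ ∈ M.act s) :
    ∑' s', μ s' * ENNReal.ofReal (V s') ≤ ENNReal.ofReal (V s) := by
  classical
  have hfin := M.act_finSupp s μ hμ
  set F : Finset S := hfin.toFinset with hF
  have hout : ∀ s' ∉ F, μ s' = 0 := by
    intro s' hs'
    by_contra h
    exact hs' (hfin.mem_toFinset.2 (μ.mem_support_iff s' |>.2 h))
  have h1 : ∑' s', μ s' * ENNReal.ofReal (V s')
      = ∑ s' ∈ F, μ s' * ENNReal.ofReal (V s') := by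
    refine tsum_eq_sum fun s' hs' => by rw [hout s' hs', zero_mul]
  have h2 : MDP.expect μ V = ∑ s' ∈ F, (μ s').toReal * V s' := by
    refine tsum_eq_sum fun s' hs' => by rw [hout s' hs', ENNReal.toReal_zero, zero_mul]
  have h3 : ∀ s' ∈ F, μ s' * ENNReal.ofReal (V s')
      = ENNReal.ofReal ((μ s').toReal * V s') := by
    intro s' hs'
    rw [ENNReal.ofReal_mul ENNReal.toReal_nonneg,
      ENNReal.ofReal_toReal (PMF.apply_ne_top μ s')]
  calc ∑' s', μ s' * ENNReal.ofReal (V s')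
      = ∑ s' ∈ F, ENNReal.ofReal ((μ s').toReal * V s') := by
        rw [h1]; exact Finset.sum_congr rfl h3
    _ = ENNReal.ofReal (∑ s' ∈ F, (μ s').toReal * V s') := by
        rw [ENNReal.ofReal_sum_of_nonneg]
        intro s' hs'
        rcases eq_or_ne (μ s') 0 with h | h
        · rw [h]; simp
        · exact mul_nonneg ENNReal.toReal_nonneg
            (hVnn s' (reach_step M σ s s' hs μ hμ h))
    _ = ENNReal.ofReal (MDP.expect μ V) := by rw [h2]
    _ ≤ ENNReal.ofReal (V s) := ENNReal.ofReal_le_ofReal (hVsm s hs μ hμ)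

/-- Maximal inequality for the supermartingale `V`. -/
lemma maximal_ineq (M : MDP S) (𝔰 : Scheduler M) (σ : S) (V : S → ℝ)
    (hVnn : ∀ s, M.Reach σ s → 0 ≤ V s)
    (hVsm : M.SupermartingaleOn σ V) (H : ℝ) :
    ∀ k hist s, M.Reach σ s →
      MDP.hitProbAux M 𝔰 {s' | H ≤ V s'} k hist s * ENNReal.ofReal H
        ≤ ENNReal.ofReal (V s) := by
  intro k
  induction k with
  | zero =>
    intro hist s hs
    rw [MDP.hitProbAux]
    split
    · rw [one_mul]; exact ENNReal.ofReal_le_ofReal (by assumption)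
    · rw [zero_mul]; exact zero_le
  | succ k ih =>
    intro hist s hs
    rw [MDP.hitProbAux]
    split
    · rw [one_mul]; exact ENNReal.ofReal_le_ofReal (by assumption)
    · rw [ENNReal.tsum_mul_right.symm]
      calc ∑' s', (𝔰.choose hist s) s'
              * MDP.hitProbAux M 𝔰 {s' | H ≤ V s'} k (hist ++ [s]) s' * ENNReal.ofReal H
          ≤ ∑' s', (𝔰.choose hist s) s' * ENNReal.ofReal (V s') := by
            refine ENNReal.tsum_le_tsum fun s' => ?_
            rcases eq_or_ne ((𝔰.choose hist s) s') 0 with h | h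
            · rw [h, zero_mul, zero_mul, zero_mul]
            · rw [mul_assoc]
              exact mul_le_mul_right
                (ih _ s' (reach_step M σ s s' hs _ (𝔰.choose_mem hist s) h)) _
        _ ≤ ENNReal.ofReal (V s) :=
            tsum_ofReal_le M σ V hVnn hVsm s hs _ (𝔰.choose_mem hist s)

/-- Progress lemma: from any reachable state with `V s ≤ n · d H`, the set
`{term} ∪ {V ≥ H}` is hit within `n` steps with probability at least `p H ^ n`. -/
lemma progress_lemma (M : MDP S) (𝔰 : Scheduler M) (σ term : S)
    (p d : ℝ → ℝ) (V : S → ℝ) (H : ℝ) (hH : 0 < H)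
    (hp_pos : ∀ r : ℝ, 0 < r → 0 < p r ∧ p r ≤ 1)
    (hp_anti : ∀ r₁ r₂ : ℝ, 0 < r₁ → r₁ ≤ r₂ → p r₂ ≤ p r₁)
    (hd_anti : ∀ r₁ r₂ : ℝ, 0 < r₁ → r₁ ≤ r₂ → d r₂ ≤ d r₁)
    (hVpos : ∀ s, M.Reach σ s → s ≠ term → 0 < V s)
    (hprog : ∀ s, M.Reach σ s → s ≠ term → ∀ μ ∈ M.act s,
      ENNReal.ofReal (p (V s)) ≤ MDP.mass μ {s' | d (V s) ≤ V s - V s'}) :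
    ∀ (n : ℕ) (hist : List S) (s : S), M.Reach σ s →
      (s ∈ ({term} ∪ {s' | H ≤ V s'} : Set S) ∨ V s ≤ (n : ℝ) * d H) →
      ENNReal.ofReal (p H) ^ n
        ≤ MDP.hitProbAux M 𝔰 ({term} ∪ {s' | H ≤ V s'}) n hist s := by
  intro n
  induction n with
  | zero =>
    intro hist s hs hcond
    rw [pow_zero]
    have hmem : s ∈ ({term} ∪ {s' | H ≤ V s'} : Set S) := by
      rcases hcond with h | h
      · exact h
      · left
        by_contra hne
        have := hVpos s hs hne
        simp only [Nat.cast_zero, zero_mul] at h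
        linarith
    rw [hitAux_of_mem M 𝔰 _ 0 hist s hmem]
  | succ n ih =>
    intro hist s hs hcond
    by_cases hmem : s ∈ ({term} ∪ {s' | H ≤ V s'} : Set S)
    · rw [hitAux_of_mem M 𝔰 _ (n+1) hist s hmem]
      exact pow_le_one' (ENNReal.ofReal_le_one.2 (hp_pos H hH).2) _
    · -- s is not terminal and V s < H
      have hne : s ≠ term := fun h => hmem (Or.inl (by simp [h]))
      have hVsH : V s < H := by
        by_contra h
        exact hmem (Or.inr (le_of_not_gt h))
      have hVs : 0 < V s := hVpos s hs hne
      have hbound : V s ≤ (n + 1 : ℕ) * d H := by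
        rcases hcond with h | h
        · exact absurd h hmem
        · exact h
      rw [MDP.hitProbAux, if_neg hmem]
      set μ := 𝔰.choose hist s with hμdef
      have hμ : μ ∈ M.act s := 𝔰.choose_mem hist s
      set A : Set S := {s' | d (V s) ≤ V s - V s'} with hA
      calc ENNReal.ofReal (p H) ^ (n + 1)
          = ENNReal.ofReal (p H) * ENNReal.ofReal (p H) ^ n := by
            rw [pow_succ, mul_comm]
        _ ≤ ENNReal.ofReal (p (V s)) * ENNReal.ofReal (p H) ^ n :=
            mul_le_mul_left
              (ENNReal.ofReal_le_ofReal (hp_anti (V s) H hVs hVsH.le)) _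
        _ ≤ MDP.mass μ A * ENNReal.ofReal (p H) ^ n :=
            mul_le_mul_left (hprog s hs hne μ hμ) _
        _ = ∑' a : A, μ a * ENNReal.ofReal (p H) ^ n := by
            rw [MDP.mass, ENNReal.tsum_mul_right]
        _ ≤ ∑' a : A, μ a
              * MDP.hitProbAux M 𝔰 ({term} ∪ {s' | H ≤ V s'}) n (hist ++ [s]) a := by
            refine ENNReal.tsum_le_tsum fun a => ?_
            rcases eq_or_ne (μ a) 0 with h0 | h0
            · rw [h0, zero_mul, zero_mul]
            · refine mul_le_mul_right ?_ _
              have hra : M.Reach σ a := reach_step M σ s a hs μ hμ h0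
              by_cases hmem' : (a : S) ∈ ({term} ∪ {s' | H ≤ V s'} : Set S)
              · rw [hitAux_of_mem M 𝔰 _ n _ _ hmem']
                exact pow_le_one' (ENNReal.ofReal_le_one.2 (hp_pos H hH).2) _
              · refine ih _ a hra (Or.inr ?_)
                have hAa : d (V s) ≤ V s - V a := a.2
                have hdH : d H ≤ d (V s) := hd_anti (V s) H hVs hVsH.le
                have : V (a : S) ≤ V s - d H := by linarith
                push_cast at hbound ⊢
                linarith
        _ ≤ ∑' s', μ s'
              * MDP.hitProbAux M 𝔰 ({term} ∪ {s' | H ≤ V s'}) n (hist ++ [s]) s' := by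
            exact ENNReal.tsum_comp_le_tsum_of_injective Subtype.val_injective _

/-- Complement recursion for the non-hitting probability. -/
lemma compl_succ (M : MDP S) (𝔰 : Scheduler M) (T : Set S) (k : ℕ) (hist : List S)
    (s : S) (hs : s ∉ T) :
    1 - MDP.hitProbAux M 𝔰 T (k+1) hist s
      = ∑' s', (𝔰.choose hist s) s' * (1 - MDP.hitProbAux M 𝔰 T k (hist ++ [s]) s') := by
  have key : (∑' s', (𝔰.choose hist s) s' * (1 - MDP.hitProbAux M 𝔰 T k (hist ++ [s]) s'))
      + (∑' s', (𝔰.choose hist s) s' * MDP.hitProbAux M 𝔰 T k (hist ++ [s]) s') = 1 := by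
    rw [← ENNReal.tsum_add]
    have : ∀ s', (𝔰.choose hist s) s' * (1 - MDP.hitProbAux M 𝔰 T k (hist ++ [s]) s')
        + (𝔰.choose hist s) s' * MDP.hitProbAux M 𝔰 T k (hist ++ [s]) s'
        = (𝔰.choose hist s) s' := by
      intro s'
      rw [← mul_add, tsub_add_cancel_of_le (hitAux_le_one M 𝔰 T k _ s'), mul_one]
    rw [tsum_congr this, (𝔰.choose hist s).tsum_coe]
  have hne : (∑' s', (𝔰.choose hist s) s' * MDP.hitProbAux M 𝔰 T k (hist ++ [s]) s') ≠ ⊤ := by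
    refine ne_top_of_le_ne_top ENNReal.one_ne_top ?_
    calc ∑' s', (𝔰.choose hist s) s' * MDP.hitProbAux M 𝔰 T k (hist ++ [s]) s'
        ≤ ∑' s', (𝔰.choose hist s) s' * 1 :=
          ENNReal.tsum_le_tsum fun s' => mul_le_mul_right (hitAux_le_one M 𝔰 T k _ s') _
      _ = 1 := by simp [(𝔰.choose hist s).tsum_coe]
  rw [MDP.hitProbAux, if_neg hs]
  exact (ENNReal.eq_sub_of_add_eq hne key).symm

/-- Markov-style composition: the probability of not hitting `T` within `a + b` steps is at
most the probability of not hitting within `a` steps times the worst-case probability of not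
hitting within `b` steps. -/
lemma compl_compose (M : MDP S) (𝔰 : Scheduler M) (σ : S) (T : Set S) (b : ℕ) :
    ∀ (a : ℕ) (hist : List S) (s : S), M.Reach σ s →
      1 - MDP.hitProbAux M 𝔰 T (a + b) hist s
        ≤ (1 - MDP.hitProbAux M 𝔰 T a hist s)
          * ⨆ (hist' : List S) (s' : S) (_ : M.Reach σ s'),
              (1 - MDP.hitProbAux M 𝔰 T b hist' s') := by
  intro a
  induction a with
  | zero =>
    intro hist s hs
    rw [zero_add]
    by_cases hm : s ∈ T
    · rw [hitAux_of_mem M 𝔰 T b hist s hm, tsub_self]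
      exact zero_le
    · rw [MDP.hitProbAux, if_neg hm, tsub_zero, one_mul]
      exact le_iSup_of_le hist (le_iSup_of_le s (le_iSup_of_le hs le_rfl))
  | succ a ih =>
    intro hist s hs
    by_cases hm : s ∈ T
    · rw [hitAux_of_mem M 𝔰 T (a + 1 + b) hist s hm, tsub_self]
      exact zero_le
    · rw [show a + 1 + b = (a + b) + 1 by omega, compl_succ M 𝔰 T (a+b) hist s hm,
        compl_succ M 𝔰 T a hist s hm, ENNReal.tsum_mul_right.symm]
      refine ENNReal.tsum_le_tsum fun s' => ?_
      rcases eq_or_ne ((𝔰.choose hist s) s') 0 with h0 | h0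
      · rw [h0, zero_mul, zero_mul, zero_mul]
      · rw [mul_assoc]
        exact mul_le_mul_right
          (ih _ s' (reach_step M σ s s' hs _ (𝔰.choose_mem hist s) h0)) _

/-- Geometric decay of the non-hitting probability. -/
lemma compl_geom (M : MDP S) (𝔰 : Scheduler M) (σ : S) (T : Set S) (N : ℕ) (ε : ℝ≥0∞)
    (hN : ∀ hist s, M.Reach σ s → ε ≤ MDP.hitProbAux M 𝔰 T N hist s) :
    ∀ (k : ℕ) (hist : List S) (s : S), M.Reach σ s →
      1 - MDP.hitProbAux M 𝔰 T (k * N) hist s ≤ (1 - ε) ^ k := by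
  intro k
  induction k with
  | zero =>
    intro hist s hs
    rw [zero_mul, pow_zero]
    exact tsub_le_self
  | succ k ih =>
    intro hist s hs
    rw [show (k + 1) * N = N + k * N by ring]
    calc 1 - MDP.hitProbAux M 𝔰 T (N + k * N) hist s
        ≤ (1 - MDP.hitProbAux M 𝔰 T N hist s)
          * ⨆ (hist' : List S) (s' : S) (_ : M.Reach σ s'),
              (1 - MDP.hitProbAux M 𝔰 T (k * N) hist' s') :=
          compl_compose M 𝔰 σ T (k * N) N hist s hs
      _ ≤ (1 - ε) * (1 - ε) ^ k := by
          refine mul_le_mul' (tsub_le_tsub_left (hN hist s hs) 1) ?_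
          exact iSup_le fun hist' => iSup_le fun s' => iSup_le fun hs' => ih hist' s' hs'
      _ = (1 - ε) ^ (k + 1) := by rw [pow_succ, mul_comm]

end Aux

/-- **Soundness of the rule of McIver, Morgan, Kaminski and Katoen.** Suppose there are
antitone progress functions `p : (0,∞) → (0,1]` and `d : (0,∞) → (0,∞)` and a
supermartingale `V` (zero at the terminal state, positive at all other reachable states)
such that at every reachable non-terminal state `s` and action `μ`, the value of `V` drops
by at least `d (V s)` with probability at least `p (V s)`.  Then `M` is almost surely
terminating from `σ`. -/
theorem mmkk_rule_sound {S : Type} [Countable S] (M : MDP S) (term σ : S)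
    (hterm : M.Absorbing term)
    (p d : ℝ → ℝ)
    (hp_pos : ∀ r : ℝ, 0 < r → 0 < p r ∧ p r ≤ 1)
    (hd_pos : ∀ r : ℝ, 0 < r → 0 < d r)
    (hp_anti : ∀ r₁ r₂ : ℝ, 0 < r₁ → r₁ ≤ r₂ → p r₂ ≤ p r₁)
    (hd_anti : ∀ r₁ r₂ : ℝ, 0 < r₁ → r₁ ≤ r₂ → d r₂ ≤ d r₁)
    (V : S → ℝ)
    (hV0 : V term = 0)
    (hVpos : ∀ s, M.Reach σ s → s ≠ term → 0 < V s)
    (hVsm : M.SupermartingaleOn σ V)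
    (hprog : ∀ s, M.Reach σ s → s ≠ term → ∀ μ ∈ M.act s,
      ENNReal.ofReal (p (V s)) ≤ MDP.mass μ {s' | d (V s) ≤ V s - V s'}) :
    M.AST term σ := by
  have hVnn : ∀ s, M.Reach σ s → 0 ≤ V s := by
    intro s hs
    by_cases h : s = term
    · rw [h, hV0]
    · exact (hVpos s hs h).le
  have sched : Scheduler M :=
    ⟨fun _ s => (M.act_nonempty s).choose, fun _ s => (M.act_nonempty s).choose_spec⟩
  have : Nonempty (Scheduler M) := ⟨sched⟩
  have hle1 : ∀ (𝔰 : Scheduler M) (T : Set S), M.hitProb 𝔰 σ T ≤ 1 :=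
    fun 𝔰 T => iSup_le fun k => hitAux_le_one M 𝔰 T k [] σ
  -- the key inequality, for every threshold `H` and scheduler
  have key : ∀ H : ℝ, 0 < H → ∀ 𝔰 : Scheduler M,
      1 ≤ M.hitProb 𝔰 σ {term} + ENNReal.ofReal (V σ) / ENNReal.ofReal H := by
    intro H hH 𝔰
    have hdH := hd_pos H hH
    have hεpos : (0:ℝ≥0∞) < ENNReal.ofReal (p H) := ENNReal.ofReal_pos.2 (hp_pos H hH).1
    have hHN : H ≤ (⌈H / d H⌉₊ : ℝ) * d H := by
      calc H = H / d H * d H := by field_simp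
        _ ≤ (⌈H / d H⌉₊ : ℝ) * d H :=
            mul_le_mul_of_nonneg_right (Nat.le_ceil _) hdH.le
    have hprogN : ∀ hist s, M.Reach σ s →
        ENNReal.ofReal (p H) ^ ⌈H / d H⌉₊
          ≤ MDP.hitProbAux M 𝔰 ({term} ∪ {s' | H ≤ V s'}) ⌈H / d H⌉₊ hist s := by
      intro hist s hs
      refine progress_lemma M 𝔰 σ term p d V H hH hp_pos hp_anti hd_anti hVpos hprog
        ⌈H / d H⌉₊ hist s hs ?_
      by_cases hm : s ∈ ({term} ∪ {s' | H ≤ V s'} : Set S)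
      · exact Or.inl hm
      · refine Or.inr ?_
        have h2 : V s < H := by
          by_contra h
          exact hm (Or.inr (le_of_not_gt h))
        linarith
    have hgeo : ∀ k : ℕ,
        1 ≤ M.hitProb 𝔰 σ ({term} ∪ {s' | H ≤ V s'})
          + (1 - ENNReal.ofReal (p H) ^ ⌈H / d H⌉₊) ^ k := by
      intro k
      have h1 := compl_geom M 𝔰 σ ({term} ∪ {s' | H ≤ V s'}) ⌈H / d H⌉₊
        (ENNReal.ofReal (p H) ^ ⌈H / d H⌉₊) hprogN k [] σ MDP.Reach.refl
      have h2 : (1:ℝ≥0∞) ≤ (1 - ENNReal.ofReal (p H) ^ ⌈H / d H⌉₊) ^ k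
          + MDP.hitProbAux M 𝔰 ({term} ∪ {s' | H ≤ V s'}) (k * ⌈H / d H⌉₊) [] σ :=
        tsub_le_iff_right.mp h1
      rw [add_comm]
      exact le_trans h2 (add_le_add_right
        (le_iSup (fun k => MDP.hitProbWithin M 𝔰 σ ({term} ∪ {s' | H ≤ V s'}) k)
          (k * ⌈H / d H⌉₊)) _)
    have hc1 : (1 - ENNReal.ofReal (p H) ^ ⌈H / d H⌉₊) < 1 :=
      ENNReal.sub_lt_self ENNReal.one_ne_top one_ne_zero
        (pow_ne_zero _ hεpos.ne')
    have hT'1 : 1 ≤ M.hitProb 𝔰 σ ({term} ∪ {s' | H ≤ V s'}) := by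
      refine ENNReal.le_of_forall_pos_le_add fun δ hδ _ => ?_
      obtain ⟨k, hk⟩ :=
        ((ENNReal.tendsto_pow_atTop_nhds_zero_of_lt_one hc1).eventually
          (gt_mem_nhds (show (0:ℝ≥0∞) < δ from ENNReal.coe_pos.2 hδ))).exists
      exact le_trans (hgeo k) (add_le_add_right hk.le _)
    have hunion : M.hitProb 𝔰 σ ({term} ∪ {s' | H ≤ V s'})
        ≤ M.hitProb 𝔰 σ {term} + M.hitProb 𝔰 σ {s' | H ≤ V s'} :=
      iSup_le fun k => le_trans (hitAux_union_le M 𝔰 {term} {s' | H ≤ V s'} k [] σ)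
        (add_le_add (le_iSup (fun k => MDP.hitProbWithin M 𝔰 σ {term} k) k)
          (le_iSup (fun k => MDP.hitProbWithin M 𝔰 σ {s' | H ≤ V s'} k) k))
    have hmax : M.hitProb 𝔰 σ {s' | H ≤ V s'}
        ≤ ENNReal.ofReal (V σ) / ENNReal.ofReal H := by
      refine iSup_le fun k => ?_
      rw [ENNReal.le_div_iff_mul_le (Or.inl (ENNReal.ofReal_pos.2 hH).ne')
        (Or.inl ENNReal.ofReal_ne_top)]
      exact maximal_ineq M 𝔰 σ V hVnn hVsm H k [] σ MDP.Reach.refl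
    calc (1:ℝ≥0∞) ≤ M.hitProb 𝔰 σ ({term} ∪ {s' | H ≤ V s'}) := hT'1
      _ ≤ M.hitProb 𝔰 σ {term} + M.hitProb 𝔰 σ {s' | H ≤ V s'} := hunion
      _ ≤ M.hitProb 𝔰 σ {term} + ENNReal.ofReal (V σ) / ENNReal.ofReal H :=
          add_le_add_right hmax _
  have h1le : M.PrTerm term σ ≤ 1 := le_trans (iInf_le _ sched) (hle1 sched {term})
  have hge : 1 ≤ M.PrTerm term σ := by
    refine ENNReal.le_of_forall_pos_le_add fun δ hδ _ => ?_
    have hδR : (0:ℝ) < (δ:ℝ) := hδ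
    have hH : 0 < (V σ + 1) / (δ:ℝ) := by
      have := hVnn σ MDP.Reach.refl
      positivity
    have hdiv : ENNReal.ofReal (V σ) / ENNReal.ofReal ((V σ + 1) / (δ:ℝ)) ≤ (δ : ℝ≥0∞) := by
      rw [ENNReal.div_le_iff_le_mul (Or.inl (ENNReal.ofReal_pos.2 hH).ne')
        (Or.inl ENNReal.ofReal_ne_top)]
      rw [← ENNReal.ofReal_coe_nnreal, ← ENNReal.ofReal_mul (by positivity)]
      refine ENNReal.ofReal_le_ofReal ?_
      have h : (δ:ℝ) * ((V σ + 1) / (δ:ℝ)) = V σ + 1 := by field_simp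
      linarith
    rw [MDP.PrTerm, ENNReal.iInf_add]
    refine le_iInf fun 𝔰 => ?_
    exact le_trans (key _ hH 𝔰) (add_le_add_right hdiv _)
  exact le_antisymm h1le hge
end

section
/- Logarithmic transform of a supermartingale: Let M be a finitely-branching MDP with absorbing terminal state ⊥ and initial state σ, and let V : S → ℝ be nonnegative with V(⊥) = 0, a supermartingale function on Reach(σ), and such that every sublevel set {s ∈ Reach(σ) : V(s) ≤ r} (r ∈ ℝ) is finite. Define V₀(s) = ln(1 + V(s)). Then V₀ is nonnegative, V₀(⊥) = 0, V₀ is a supermartingale function on Reach(σ), every sublevel set {s ∈ Reach(σ) : V₀(s) ≤ r} is finite, and for every s ∈ Reach(σ) and every action μ ∈ Act(s) whose support contains some s' with V(s') ≠ V(s), the strict inequality V₀(s) > Σ_{s'} μ(s')·V₀(s') holds. -/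
open scoped ENNReal Classical

section Aux

open MDP

/-- Expectation as a finite sum over the support. -/
lemma expect_eq_sum {S : Type} (μ : PMF S) (h : μ.support.Finite) (f : S → ℝ) :
    MDP.expect μ f = ∑ s ∈ h.toFinset, (μ s).toReal * f s := by
  refine tsum_eq_sum ?_
  intro b hb
  have : μ b = 0 := by
    by_contra hb'
    exact hb (h.mem_toFinset.mpr hb')
  simp [this]

lemma weight_sum_eq_one {S : Type} (μ : PMF S) (h : μ.support.Finite) :
    ∑ s ∈ h.toFinset, (μ s).toReal = 1 := by
  have h1 : ∑' s, μ s = 1 := μ.tsum_coe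
  have h2 : (∑' s, μ s) = ∑ s ∈ h.toFinset, μ s := by
    refine tsum_eq_sum ?_
    intro b hb
    by_contra hb'
    exact hb (h.mem_toFinset.mpr hb')
  have h3 : ∑ s ∈ h.toFinset, μ s = 1 := h2 ▸ h1
  have := congrArg ENNReal.toReal h3
  rwa [ENNReal.toReal_sum (fun a _ => μ.apply_ne_top a)] at this

/-- Jensen for the log transform, with strictness under non-constancy on the support. -/
lemma expect_log_le {S : Type} (μ : PMF S) (h : μ.support.Finite) (V : S → ℝ)
    (hVnn : ∀ s, 0 ≤ V s) :
    MDP.expect μ (fun s => Real.log (1 + V s)) ≤ Real.log (1 + MDP.expect μ V) := by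
  classical
  set t := h.toFinset with ht
  have hw0 : ∀ s ∈ t, (0:ℝ) ≤ (μ s).toReal := fun s _ => ENNReal.toReal_nonneg
  have hw1 : ∑ s ∈ t, (μ s).toReal = 1 := weight_sum_eq_one μ h
  have hmem : ∀ s ∈ t, (1 + V s) ∈ Set.Ioi (0:ℝ) := fun s _ => by
    have := hVnn s; simp only [Set.mem_Ioi]; linarith
  have hJ := strictConcaveOn_log_Ioi.concaveOn.le_map_sum (w := fun s => (μ s).toReal)
    (p := fun s => 1 + V s) hw0 hw1 hmem
  have hsum : ∑ s ∈ t, (μ s).toReal • (1 + V s) = 1 + MDP.expect μ V := by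
    rw [expect_eq_sum μ h V]
    simp only [smul_eq_mul, mul_add, Finset.sum_add_distrib, mul_one, hw1]
    rfl
  have hexp : MDP.expect μ (fun s => Real.log (1 + V s)) =
      ∑ s ∈ t, (μ s).toReal • Real.log (1 + V s) := by
    rw [expect_eq_sum μ h (fun s => Real.log (1 + V s))]; simp [smul_eq_mul]
    rfl
  rw [hexp, ← hsum]
  exact hJ

lemma expect_log_lt {S : Type} (μ : PMF S) (h : μ.support.Finite) (V : S → ℝ)
    (hVnn : ∀ s, 0 ≤ V s)
    (hne : ∃ j ∈ μ.support, ∃ k ∈ μ.support, V j ≠ V k) :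
    MDP.expect μ (fun s => Real.log (1 + V s)) < Real.log (1 + MDP.expect μ V) := by
  classical
  set t := h.toFinset with ht
  have hw0 : ∀ s ∈ t, (0:ℝ) < (μ s).toReal := fun s hs => by
    have hs' : μ s ≠ 0 := (h.mem_toFinset.mp hs)
    exact ENNReal.toReal_pos hs' (μ.apply_ne_top s)
  have hw1 : ∑ s ∈ t, (μ s).toReal = 1 := weight_sum_eq_one μ h
  have hmem : ∀ s ∈ t, (1 + V s) ∈ Set.Ioi (0:ℝ) := fun s _ => by
    have := hVnn s; simp only [Set.mem_Ioi]; linarith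
  obtain ⟨j, hj, k, hk, hjk⟩ := hne
  have hp : ∃ j ∈ t, ∃ k ∈ t, (1 + V j) ≠ (1 + V k) :=
    ⟨j, h.mem_toFinset.mpr hj, k, h.mem_toFinset.mpr hk, by intro hc; exact hjk (by linarith)⟩
  have hJ := strictConcaveOn_log_Ioi.lt_map_sum (w := fun s => (μ s).toReal)
    (p := fun s => 1 + V s) hw0 hw1 hmem hp
  have hsum : ∑ s ∈ t, (μ s).toReal • (1 + V s) = 1 + MDP.expect μ V := by
    rw [expect_eq_sum μ h V]
    simp only [smul_eq_mul, mul_add, Finset.sum_add_distrib, mul_one, hw1]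
    rfl
  have hexp : MDP.expect μ (fun s => Real.log (1 + V s)) =
      ∑ s ∈ t, (μ s).toReal • Real.log (1 + V s) := by
    rw [expect_eq_sum μ h (fun s => Real.log (1 + V s))]; simp [smul_eq_mul]
    rfl
  rw [hexp, ← hsum]
  exact hJ

end Aux

/-- **Logarithmic transform of a supermartingale.** If `V` is nonnegative, zero at the
terminal state, a supermartingale function on the reachable states, with all sublevel
sets finite, then `V₀ s = ln (1 + V s)` is nonnegative, zero at the terminal state, a
supermartingale function on the reachable states with finite sublevel sets, and for every
reachable state `s` and action `μ` whose support contains some `s'` with `V s' ≠ V s`, the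
supermartingale inequality for `V₀` at `s, μ` is strict. -/
theorem log_transform_supermartingale {S : Type} [Countable S] (M : MDP S) (term σ : S)
    (hterm : M.Absorbing term)
    (V : S → ℝ) (hVnn : ∀ s, 0 ≤ V s) (hV0 : V term = 0)
    (hVsm : M.SupermartingaleOn σ V)
    (hsub : ∀ r : ℝ, {s | M.Reach σ s ∧ V s ≤ r}.Finite) :
    (∀ s, 0 ≤ Real.log (1 + V s)) ∧
    Real.log (1 + V term) = 0 ∧
    M.SupermartingaleOn σ (fun s => Real.log (1 + V s)) ∧
    (∀ r : ℝ, {s | M.Reach σ s ∧ Real.log (1 + V s) ≤ r}.Finite) ∧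
    (∀ s, M.Reach σ s → ∀ μ ∈ M.act s, (∃ s' ∈ μ.support, V s' ≠ V s) →
      MDP.expect μ (fun s' => Real.log (1 + V s')) < Real.log (1 + V s)) := by
  have hnn : ∀ s, 0 ≤ Real.log (1 + V s) := fun s =>
    Real.log_nonneg (by have := hVnn s; linarith)
  refine ⟨hnn, by simp [hV0], ?_, ?_, ?_⟩
  · intro s hs μ hμ
    have hfin := M.act_finSupp s μ hμ
    calc MDP.expect μ (fun s' => Real.log (1 + V s'))
        ≤ Real.log (1 + MDP.expect μ V) := expect_log_le μ hfin V hVnn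
      _ ≤ Real.log (1 + V s) := by
          have hEnn : 0 ≤ MDP.expect μ V := by
            rw [expect_eq_sum μ hfin V]
            exact Finset.sum_nonneg fun a _ => mul_nonneg ENNReal.toReal_nonneg (hVnn a)
          have hEle := hVsm s hs μ hμ
          rw [Real.log_le_log_iff (by linarith) (by have := hVnn s; linarith)]
          linarith
  · intro r
    apply (hsub (Real.exp r - 1)).subset
    rintro s ⟨h1, h2⟩
    refine ⟨h1, ?_⟩
    have h3 : 1 + V s ≤ Real.exp r := by
      calc 1 + V s = Real.exp (Real.log (1 + V s)) :=
            (Real.exp_log (by have := hVnn s; linarith)).symm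
        _ ≤ Real.exp r := Real.exp_le_exp.mpr h2
    linarith
  · rintro s hs μ hμ ⟨s', hs', hne⟩
    have hfin := M.act_finSupp s μ hμ
    have hEnn : 0 ≤ MDP.expect μ V := by
      rw [expect_eq_sum μ hfin V]
      exact Finset.sum_nonneg fun a _ => mul_nonneg ENNReal.toReal_nonneg (hVnn a)
    have hEle : MDP.expect μ V ≤ V s := hVsm s hs μ hμ
    by_cases hconst : ∀ j ∈ μ.support, ∀ k ∈ μ.support, V j = V k
    · -- V constant (= c) on support; c = V s' ≠ V s, and expect = c ≤ V s, so c < V s.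
      have hEeq : MDP.expect μ V = V s' := by
        rw [expect_eq_sum μ hfin V]
        have : ∀ a ∈ hfin.toFinset, (μ a).toReal * V a = (μ a).toReal * V s' := by
          intro a ha
          rw [hconst a (hfin.mem_toFinset.mp ha) s' hs']
        rw [Finset.sum_congr rfl this, ← Finset.sum_mul, weight_sum_eq_one μ hfin, one_mul]
      have hlt : V s' < V s := lt_of_le_of_ne (hEeq ▸ hEle) hne
      calc MDP.expect μ (fun t => Real.log (1 + V t))
          ≤ Real.log (1 + MDP.expect μ V) := expect_log_le μ hfin V hVnn
        _ = Real.log (1 + V s') := by rw [hEeq]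
        _ < Real.log (1 + V s) := by
            apply Real.log_lt_log (by have := hVnn s'; linarith); linarith
    · push_neg at hconst
      obtain ⟨j, hj, k, hk, hjk⟩ := hconst
      calc MDP.expect μ (fun t => Real.log (1 + V t))
          < Real.log (1 + MDP.expect μ V) :=
            expect_log_lt μ hfin V hVnn ⟨j, hj, k, hk, hjk⟩
        _ ≤ Real.log (1 + V s) := by
            rw [Real.log_le_log_iff (by linarith) (by have := hVnn s; linarith)]
            linarith
end

section
/- Correspondence between stochastic invariants and stochastic invariant indicators: Let M be a finitely-branching MDP with initial state σ and let p ∈ [0,1]. (i) If SI : S → ℝ is nonnegative, is a supermartingale function on Reach(σ), and satisfies SI(σ) ≤ p, then the pair (Ψ, p) with Ψ = {s ∈ S : SI(s) < 1} is a stochastic invariant for σ. (ii) Conversely, if (Ψ, p) is a stochastic invariant for σ, then there exists a nonnegative function SI : S → ℝ that is a supermartingale function on Reach(σ), satisfies SI(σ) ≤ p, and satisfies {s ∈ Reach(σ) : SI(s) < 1} ⊆ Ψ. -/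
open scoped ENNReal Classical

section Aux

open MDP

variable {S : Type}

/-- A default scheduler. -/
noncomputable def defaultSched (M : MDP S) : Scheduler M where
  choose _ s := (M.act_nonempty s).choose
  choose_mem _ s := (M.act_nonempty s).choose_spec

noncomputable instance (M : MDP S) : Nonempty (Scheduler M) := ⟨defaultSched M⟩

lemma hitProbAux_le_one (M : MDP S) (s : Scheduler M) (T : Set S) :
    ∀ k hist t, M.hitProbAux s T k hist t ≤ 1 := by
  intro k
  induction k with
  | zero => intro hist t; rw [MDP.hitProbAux]; split <;> simp
  | succ k ih =>
    intro hist t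
    rw [MDP.hitProbAux]
    split
    · exact le_refl 1
    · calc ∑' t', (s.choose hist t) t' * M.hitProbAux s T k (hist ++ [t]) t'
          ≤ ∑' t', (s.choose hist t) t' * 1 := by
            exact ENNReal.tsum_le_tsum fun t' => mul_le_mul_right (ih _ _) _
        _ = 1 := by simp [(s.choose hist t).tsum_coe]

lemma hitProbAux_mono (M : MDP S) (s : Scheduler M) (T : Set S) :
    ∀ k hist t, M.hitProbAux s T k hist t ≤ M.hitProbAux s T (k + 1) hist t := by
  intro k
  induction k with
  | zero =>
    intro hist t
    rw [MDP.hitProbAux, MDP.hitProbAux]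
    split <;> simp
  | succ k ih =>
    intro hist t
    rw [MDP.hitProbAux, MDP.hitProbAux]
    split
    · exact le_refl 1
    · exact ENNReal.tsum_le_tsum fun t' => mul_le_mul_right (ih _ _) _

lemma hitProbWithin_mono (M : MDP S) (s : Scheduler M) (t : S) (T : Set S) :
    Monotone (M.hitProbWithin s t T) :=
  monotone_nat_of_le_succ fun k => hitProbAux_mono M s T k [] t

/-- The scheduler shifted by a fixed history prefix. -/
def shiftSched (M : MDP S) (s : Scheduler M) (pre : List S) : Scheduler M where
  choose h t := s.choose (pre ++ h) t
  choose_mem h t := s.choose_mem _ t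

lemma hitProbAux_shift (M : MDP S) (s : Scheduler M) (pre : List S) (T : Set S) :
    ∀ k h t, M.hitProbAux s T k (pre ++ h) t = M.hitProbAux (shiftSched M s pre) T k h t := by
  intro k
  induction k with
  | zero => intro h t; rw [MDP.hitProbAux, MDP.hitProbAux]
  | succ k ih =>
    intro h t
    rw [MDP.hitProbAux, MDP.hitProbAux]
    split
    · rfl
    · refine tsum_congr fun t' => ?_
      have : pre ++ h ++ [t] = pre ++ (h ++ [t]) := by simp
      rw [show (shiftSched M s pre).choose h t = s.choose (pre ++ h) t from rfl,
        ← ih (h ++ [t]) t', this]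

lemma pmf_apply_ne_top (μ : PMF S) (t : S) : μ t ≠ ⊤ :=
  ne_of_lt (lt_of_le_of_lt (PMF.coe_le_one μ t) ENNReal.one_lt_top)

lemma expect_ofReal (μ : PMF S) (hfin : μ.support.Finite) (V : S → ℝ)
    (hnn : ∀ t, 0 ≤ V t) :
    ∑' t, μ t * ENNReal.ofReal (V t) = ENNReal.ofReal (MDP.expect μ V) := by
  classical
  have hz : ∀ t ∉ hfin.toFinset, μ t * ENNReal.ofReal (V t) = 0 := by
    intro t ht
    have : μ t = 0 := by simpa [PMF.mem_support_iff] using ht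
    simp [this]
  have hz' : ∀ t ∉ hfin.toFinset, (μ t).toReal * V t = 0 := by
    intro t ht
    have : μ t = 0 := by simpa [PMF.mem_support_iff] using ht
    simp [this]
  rw [tsum_eq_sum hz, MDP.expect, tsum_eq_sum hz',
    ENNReal.ofReal_sum_of_nonneg (fun t _ => mul_nonneg ENNReal.toReal_nonneg (hnn t))]
  refine Finset.sum_congr rfl fun t _ => ?_
  rw [ENNReal.ofReal_mul ENNReal.toReal_nonneg, ENNReal.ofReal_toReal (pmf_apply_ne_top μ t)]

lemma part_i_aux (M : MDP S) (σ : S) (SI : S → ℝ) (hnn : ∀ t, 0 ≤ SI t)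
    (hsm : M.SupermartingaleOn σ SI) (s : Scheduler M) :
    ∀ k hist t, M.Reach σ t →
      M.hitProbAux s {u | SI u < 1}ᶜ k hist t ≤ ENNReal.ofReal (SI t) := by
  intro k
  induction k with
  | zero =>
    intro hist t ht
    rw [MDP.hitProbAux]
    split
    · rename_i hmem
      have h1 : (1 : ℝ) ≤ SI t := not_lt.mp hmem
      simpa using ENNReal.one_le_ofReal.mpr h1
    · simp
  | succ k ih =>
    intro hist t ht
    rw [MDP.hitProbAux]
    split
    · rename_i hmem
      have h1 : (1 : ℝ) ≤ SI t := not_lt.mp hmem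
      simpa using ENNReal.one_le_ofReal.mpr h1
    · set μ := s.choose hist t with hμdef
      have hμ : μ ∈ M.act t := s.choose_mem hist t
      have hfin := M.act_finSupp t μ hμ
      calc ∑' t', μ t' * M.hitProbAux s {u | SI u < 1}ᶜ k (hist ++ [t]) t'
          ≤ ∑' t', μ t' * ENNReal.ofReal (SI t') := by
            refine ENNReal.tsum_le_tsum fun t' => ?_
            by_cases hsupp : t' ∈ μ.support
            · exact mul_le_mul_right (ih _ _ (MDP.Reach.step μ ht hμ hsupp)) _
            · have : μ t' = 0 := by simpa [PMF.mem_support_iff] using hsupp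
              simp [this]
        _ = ENNReal.ofReal (MDP.expect μ SI) := expect_ofReal μ hfin SI hnn
        _ ≤ ENNReal.ofReal (SI t) := ENNReal.ofReal_le_ofReal (hsm t ht μ hμ)

/-- Scheduler that plays `μ` first (from `s`) and then follows `g s'` where `s'` is the
first state visited after `s`. -/
noncomputable def combineSched (M : MDP S) (μ : PMF S) (g : S → Scheduler M) :
    Scheduler M where
  choose hist t :=
    match hist with
    | [] => if μ ∈ M.act t then μ else (M.act_nonempty t).choose
    | _ :: rest => (g (rest.headD t)).choose rest t
  choose_mem hist t := by
    match hist with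
    | [] =>
      by_cases h : μ ∈ M.act t
      · simpa [h]
      · simpa [h] using (M.act_nonempty t).choose_spec
    | _ :: rest => exact (g (rest.headD t)).choose_mem rest t

lemma combine_aux (M : MDP S) (μ : PMF S) (g : S → Scheduler M) (s : S) (T : Set S)
    (t0 : S) :
    ∀ k h t, h.headD t = t0 →
      M.hitProbAux (shiftSched M (combineSched M μ g) [s]) T k h t
        = M.hitProbAux (g t0) T k h t := by
  intro k
  induction k with
  | zero => intro h t _; rw [MDP.hitProbAux, MDP.hitProbAux]
  | succ k ih =>
    intro h t hh
    rw [MDP.hitProbAux, MDP.hitProbAux]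
    split
    · rfl
    · have hc : (shiftSched M (combineSched M μ g) [s]).choose h t = (g t0).choose h t := by
        show (combineSched M μ g).choose ([s] ++ h) t = (g t0).choose h t
        show (g (h.headD t)).choose h t = (g t0).choose h t
        rw [hh]
      rw [hc]
      refine tsum_congr fun t' => ?_
      have hh' : (h ++ [t]).headD t' = t0 := by
        cases h with
        | nil => simpa using hh
        | cons a rest => simpa using hh
      rw [ih (h ++ [t]) t' hh']

/-- The value function for part (ii). -/
noncomputable def valFun (M : MDP S) (T : Set S) (t : S) : ℝ≥0∞ :=
  ⨆ s : Scheduler M, M.hitProb s t T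

lemma valFun_le_one (M : MDP S) (T : Set S) (t : S) : valFun M T t ≤ 1 :=
  iSup_le fun s => iSup_le fun k => hitProbAux_le_one M s T k [] t

lemma valFun_ne_top (M : MDP S) (T : Set S) (t : S) : valFun M T t ≠ ⊤ :=
  ne_of_lt (lt_of_le_of_lt (valFun_le_one M T t) ENNReal.one_lt_top)

lemma one_le_valFun (M : MDP S) (T : Set S) (t : S) (ht : t ∈ T) : 1 ≤ valFun M T t := by
  refine le_trans ?_ (le_iSup _ (defaultSched M))
  refine le_trans ?_ (le_iSup _ 0)
  rw [MDP.hitProbWithin, MDP.hitProbAux]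
  simp [ht]

lemma sum_within_le_valFun (M : MDP S) (T : Set S) (s : S) (μ : PMF S)
    (hμ : μ ∈ M.act s) (g : S → Scheduler M) (k : ℕ) :
    ∑' t, μ t * M.hitProbWithin (g t) t T k ≤ valFun M T s := by
  by_cases hs : s ∈ T
  · calc ∑' t, μ t * M.hitProbWithin (g t) t T k
        ≤ ∑' t, μ t * 1 :=
          ENNReal.tsum_le_tsum fun t => mul_le_mul_right (hitProbAux_le_one M _ T k [] t) _
      _ = 1 := by simp [μ.tsum_coe]
      _ ≤ valFun M T s := one_le_valFun M T s hs
  · set c := combineSched M μ g with hc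
    refine le_trans ?_ (le_iSup (fun s' : Scheduler M => M.hitProb s' s T) c)
    refine le_trans ?_ (le_iSup (fun k' => M.hitProbWithin c s T k') (k + 1))
    rw [MDP.hitProbWithin, MDP.hitProbAux, if_neg hs]
    have hchoose : c.choose [] s = μ := by
      show (if μ ∈ M.act s then μ else (M.act_nonempty s).choose) = μ
      rw [if_pos hμ]
    rw [hchoose]
    refine ENNReal.tsum_le_tsum fun t => mul_le_mul_right ?_ _
    have : M.hitProbAux c T k ([s] ++ []) t
        = M.hitProbAux (shiftSched M c [s]) T k [] t := hitProbAux_shift M c [s] T k [] t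
    simp only [List.append_nil] at this
    simp only [List.nil_append]
    rw [this, combine_aux M μ g s T t k [] t (by simp)]
    exact le_refl _

lemma sum_valFun_le (M : MDP S) (T : Set S) (s : S) (μ : PMF S) (hμ : μ ∈ M.act s) :
    ∑' t, μ t * valFun M T t ≤ valFun M T s := by
  classical
  refine ENNReal.le_of_forall_pos_le_add fun ε hε _ => ?_
  -- for each t, choose a scheduler and horizon witnessing valFun within ε
  have hwit : ∀ t : S, ∃ w : Scheduler M × ℕ,
      valFun M T t ≤ M.hitProbWithin w.1 t T w.2 + ε := by
    intro t
    by_cases h0 : valFun M T t = 0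
    · exact ⟨(defaultSched M, 0), by simp [h0]⟩
    · have hlt : valFun M T t - ε < valFun M T t :=
        ENNReal.sub_lt_self (valFun_ne_top M T t) h0 (by exact_mod_cast hε.ne')
      rw [valFun] at hlt
      obtain ⟨sc, hsc⟩ := lt_iSup_iff.mp hlt
      rw [MDP.hitProb] at hsc
      obtain ⟨k, hk⟩ := lt_iSup_iff.mp hsc
      exact ⟨(sc, k), tsub_le_iff_right.mp hk.le⟩
  choose w hw using hwit
  set F := (M.act_finSupp s μ hμ).toFinset with hF
  set K := F.sup (fun t => (w t).2) with hK
  set g : S → Scheduler M := fun t => (w t).1 with hg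
  have hz : ∀ t ∉ F, μ t * valFun M T t = 0 := by
    intro t ht
    have : μ t = 0 := by simpa [hF, PMF.mem_support_iff] using ht
    simp [this]
  rw [tsum_eq_sum hz]
  have step1 : ∀ t ∈ F, μ t * valFun M T t ≤ μ t * M.hitProbWithin (g t) t T K + μ t * ε := by
    intro t htF
    calc μ t * valFun M T t ≤ μ t * (M.hitProbWithin (g t) t T (w t).2 + ε) :=
          mul_le_mul_right (hw t) _
      _ ≤ μ t * (M.hitProbWithin (g t) t T K + ε) := by
          gcongr
          exact hitProbWithin_mono M (g t) t T
            (Finset.le_sup (f := fun t => (w t).2) htF)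
      _ = μ t * M.hitProbWithin (g t) t T K + μ t * ε := mul_add _ _ _
  calc ∑ t ∈ F, μ t * valFun M T t
      ≤ ∑ t ∈ F, (μ t * M.hitProbWithin (g t) t T K + μ t * ε) :=
        Finset.sum_le_sum step1
    _ = (∑ t ∈ F, μ t * M.hitProbWithin (g t) t T K) + (∑ t ∈ F, μ t * ε) := by
        rw [Finset.sum_add_distrib]
    _ ≤ (∑' t, μ t * M.hitProbWithin (g t) t T K) + (∑' t, μ t * ε) := by
        gcongr <;> exact ENNReal.sum_le_tsum F
    _ ≤ valFun M T s + ε := by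
        have h2 : (∑' t, μ t * (ε : ℝ≥0∞)) = (ε : ℝ≥0∞) := by
          rw [ENNReal.tsum_mul_right, μ.tsum_coe, one_mul]
        rw [h2]
        gcongr
        exact sum_within_le_valFun M T s μ hμ g K

end Aux

/-- **Correspondence between stochastic invariants and stochastic invariant indicators.**
(i) Any nonnegative supermartingale function `SI` on the reachable states with `SI σ ≤ p`
yields a stochastic invariant `({s | SI s < 1}, p)` for `σ`.
(ii) Conversely, every stochastic invariant `(Ψ, p)` for `σ` is witnessed by a nonnegative
supermartingale function `SI` with `SI σ ≤ p` whose reachable sub-one level set is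
contained in `Ψ`. -/
theorem stochastic_invariant_indicator_correspondence {S : Type} [Countable S] (M : MDP S)
    (σ : S) (p : ℝ) (hp0 : 0 ≤ p) (hp1 : p ≤ 1) :
    (∀ SI : S → ℝ, (∀ s, 0 ≤ SI s) → M.SupermartingaleOn σ SI → SI σ ≤ p →
      M.StochasticInvariant σ {s | SI s < 1} p) ∧
    (∀ Ψ : Set S, M.StochasticInvariant σ Ψ p →
      ∃ SI : S → ℝ, (∀ s, 0 ≤ SI s) ∧ M.SupermartingaleOn σ SI ∧ SI σ ≤ p ∧
        {s | M.Reach σ s ∧ SI s < 1} ⊆ Ψ) := by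
  classical
  constructor
  · -- part (i)
    intro SI hnn hsm hσ
    rw [MDP.StochasticInvariant]
    refine iSup_le fun 𝔰 => iSup_le fun k => ?_
    calc M.hitProbAux 𝔰 {s | SI s < 1}ᶜ k [] σ ≤ ENNReal.ofReal (SI σ) :=
        part_i_aux M σ SI hnn hsm 𝔰 k [] σ MDP.Reach.refl
      _ ≤ ENNReal.ofReal p := ENNReal.ofReal_le_ofReal hσ
  · -- part (ii)
    intro Ψ hSI
    set V : S → ℝ≥0∞ := valFun M Ψᶜ with hV
    refine ⟨fun s => if M.Reach σ s then (V s).toReal else 0, ?_, ?_, ?_, ?_⟩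
    · intro s; beta_reduce; split <;> simp [ENNReal.toReal_nonneg]
    · intro s hs μ hμ
      beta_reduce
      have hSIs : (if M.Reach σ s then (V s).toReal else 0) = (V s).toReal := if_pos hs
      rw [hSIs]
      set F := (M.act_finSupp s μ hμ).toFinset with hF
      have hz : ∀ t ∉ F, (μ t).toReal * (if M.Reach σ t then (V t).toReal else 0) = 0 := by
        intro t ht
        have : μ t = 0 := by simpa [hF, PMF.mem_support_iff] using ht
        simp [this]
      rw [MDP.expect, tsum_eq_sum hz]
      have hterm : ∀ t ∈ F, (μ t).toReal * (if M.Reach σ t then (V t).toReal else 0)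
          = (μ t * V t).toReal := by
        intro t htF
        have hsupp : t ∈ μ.support := by simpa [hF] using htF
        have hr : M.Reach σ t := MDP.Reach.step μ hs hμ hsupp
        rw [if_pos hr, ENNReal.toReal_mul]
      rw [Finset.sum_congr rfl hterm]
      have hne : ∀ t ∈ F, μ t * V t ≠ ⊤ :=
        fun t _ => ENNReal.mul_ne_top (pmf_apply_ne_top μ t) (valFun_ne_top M Ψᶜ t)
      rw [← ENNReal.toReal_sum hne]
      refine ENNReal.toReal_mono (valFun_ne_top M Ψᶜ s) ?_
      have hz' : ∀ t ∉ F, μ t * V t = 0 := by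
        intro t ht
        have : μ t = 0 := by simpa [hF, PMF.mem_support_iff] using ht
        simp [this]
      rw [← tsum_eq_sum (L := SummationFilter.unconditional S) hz']
      exact sum_valFun_le M Ψᶜ s μ hμ
    · beta_reduce
      rw [if_pos MDP.Reach.refl]
      have : V σ ≤ ENNReal.ofReal p := hSI
      calc (V σ).toReal ≤ (ENNReal.ofReal p).toReal :=
          ENNReal.toReal_mono ENNReal.ofReal_ne_top this
        _ = p := ENNReal.toReal_ofReal hp0
    · rintro s ⟨hr, hlt⟩
      beta_reduce at hlt
      by_contra hsΨ
      have h1 : (1 : ℝ≥0∞) ≤ V s := one_le_valFun M Ψᶜ s hsΨ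
      have : (1 : ℝ) ≤ (V s).toReal := by
        have := ENNReal.toReal_mono (valFun_ne_top M Ψᶜ s) h1
        simpa using this
      rw [if_pos hr] at hlt
      linarith
end

section
/- Soundness of the upper bound rule: Let M be a finitely-branching MDP with absorbing terminal state ⊥ and initial state σ, and let p ∈ (0,1). Suppose there exists a nonnegative function SI : S → ℝ that is a supermartingale function on Reach(σ) and satisfies SI(σ) ≤ p and SI(⊥) ≥ 1. Then for every scheduler 𝔰, ℙ_{𝔰,σ}(the run visits ⊥) ≤ p; in particular Pr_term(σ) ≤ p. -/
open scoped ENNReal Classical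

private lemma hitAux_le {S : Type} (M : MDP S) (𝔰 : Scheduler M) (term σ : S)
    (SI : S → ℝ) (hnn : ∀ s, 0 ≤ SI s)
    (hsm : M.SupermartingaleOn σ SI) (hone : 1 ≤ SI term) :
    ∀ k (hist : List S) (s : S), M.Reach σ s →
      M.hitProbAux 𝔰 {term} k hist s ≤ ENNReal.ofReal (SI s) := by
  intro k
  induction k with
  | zero =>
    intro hist s hs
    simp only [MDP.hitProbAux]
    split
    · rename_i h
      have : s = term := h
      subst this
      simpa using ENNReal.one_le_ofReal.mpr hone
    · simp
  | succ k ih =>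
    intro hist s hs
    simp only [MDP.hitProbAux]
    split
    · rename_i h
      have : s = term := h
      subst this
      simpa using ENNReal.one_le_ofReal.mpr hone
    · set μ := 𝔰.choose hist s with hμ
      have hμmem : μ ∈ M.act s := 𝔰.choose_mem hist s
      have hfin : μ.support.Finite := M.act_finSupp s μ hμmem
      have step1 : ∑' s', μ s' * M.hitProbAux 𝔰 {term} k (hist ++ [s]) s'
          ≤ ∑' s', μ s' * ENNReal.ofReal (SI s') := by
        apply ENNReal.tsum_le_tsum
        intro s'
        by_cases hz : μ s' = 0
        · simp [hz]
        · exact mul_le_mul_right (ih (hist ++ [s]) s'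
            (MDP.Reach.step μ hs hμmem hz)) _
      refine step1.trans ?_
      have hrw : ∀ s', μ s' * ENNReal.ofReal (SI s')
          = ENNReal.ofReal ((μ s').toReal * SI s') := by
        intro s'
        rw [ENNReal.ofReal_mul (ENNReal.toReal_nonneg), ENNReal.ofReal_toReal (μ.apply_ne_top s')]
      have hsummable : Summable (fun s' => (μ s').toReal * SI s') := by
        apply summable_of_ne_finset_zero (s := hfin.toFinset)
        intro s' hs'
        have hz : μ s' = 0 := by
          by_contra h
          exact hs' (hfin.mem_toFinset.mpr h)
        simp [hz]
      calc ∑' s', μ s' * ENNReal.ofReal (SI s')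
          = ∑' s', ENNReal.ofReal ((μ s').toReal * SI s') := by
            exact tsum_congr hrw
        _ = ENNReal.ofReal (∑' s', (μ s').toReal * SI s') := by
            rw [ENNReal.ofReal_tsum_of_nonneg (fun s' => mul_nonneg ENNReal.toReal_nonneg (hnn s')) hsummable]
        _ ≤ ENNReal.ofReal (SI s) := by
            exact ENNReal.ofReal_le_ofReal (hsm s hs μ hμmem)

/-- **Soundness of the upper bound rule.** If there is a nonnegative supermartingale
function `SI` on the reachable states with `SI σ ≤ p` and `SI term ≥ 1`, then under every
scheduler the probability of visiting the terminal state is at most `p`; in particular the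
termination probability is at most `p`. -/
theorem upper_bound_rule_sound {S : Type} [Countable S] (M : MDP S) (term σ : S)
    (hterm : M.Absorbing term)
    (p : ℝ) (hp0 : 0 < p) (hp1 : p < 1)
    (SI : S → ℝ) (hnn : ∀ s, 0 ≤ SI s)
    (hsm : M.SupermartingaleOn σ SI)
    (hinit : SI σ ≤ p) (hone : 1 ≤ SI term) :
    (∀ 𝔰 : Scheduler M, M.hitProb 𝔰 σ {term} ≤ ENNReal.ofReal p) ∧
    M.PrTerm term σ ≤ ENNReal.ofReal p := by
  have main : ∀ 𝔰 : Scheduler M, M.hitProb 𝔰 σ {term} ≤ ENNReal.ofReal p := by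
    intro 𝔰
    apply iSup_le
    intro k
    calc M.hitProbWithin 𝔰 σ {term} k
        ≤ ENNReal.ofReal (SI σ) :=
          hitAux_le M 𝔰 term σ SI hnn hsm hone k [] σ MDP.Reach.refl
      _ ≤ ENNReal.ofReal p := ENNReal.ofReal_le_ofReal hinit
  have hsched : Nonempty (Scheduler M) :=
    ⟨⟨fun _ s => (M.act_nonempty s).choose, fun _ s => (M.act_nonempty s).choose_spec⟩⟩
  refine ⟨main, ?_⟩
  exact (iInf_le _ hsched.some).trans (main hsched.some)
end

section
/- Soundness of the stochastic-invariant rule for lower bounds: Let M be a finitely-branching MDP with absorbing terminal state ⊥ and initial state σ, let p ∈ [0,1], and let (Ψ, p) be a stochastic invariant for σ. Suppose moreover that for every scheduler 𝔰, ℙ_{𝔰,σ}(the run visits ⊥ or some state of the run lies outside Ψ) = 1. Then for every scheduler 𝔰, ℙ_{𝔰,σ}(the run visits ⊥) ≥ 1 − p; in particular Pr_term(σ) ≥ 1 − p. -/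
open scoped ENNReal Classical

lemma hitProbAux_union_le {S : Type} (M : MDP S) (𝔰 : Scheduler M) (A B : Set S) :
    ∀ k hist s, M.hitProbAux 𝔰 (A ∪ B) k hist s ≤
      M.hitProbAux 𝔰 A k hist s + M.hitProbAux 𝔰 B k hist s := by
  intro k
  induction k with
  | zero =>
    intro hist s
    simp only [MDP.hitProbAux]
    by_cases hA : s ∈ A
    · simp [hA]
    by_cases hB : s ∈ B
    · simp [hB]
    · simp [hA, hB]
  | succ k ih =>
    intro hist s
    simp only [MDP.hitProbAux]
    by_cases hA : s ∈ A
    · simp only [Set.mem_union, hA, true_or, if_true, if_pos hA]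
      exact le_add_right le_rfl
    by_cases hB : s ∈ B
    · simp only [Set.mem_union, hB, or_true, if_true, if_pos hB]
      exact le_add_left le_rfl
    · have hAB : s ∉ A ∪ B := by simp [hA, hB]
      simp only [if_neg hAB, if_neg hA, if_neg hB]
      rw [← ENNReal.tsum_add]
      refine ENNReal.tsum_le_tsum fun s' => ?_
      rw [← mul_add]
      exact mul_le_mul_right (ih _ _) _

lemma hitProb_union_le {S : Type} (M : MDP S) (𝔰 : Scheduler M) (σ : S) (A B : Set S) :
    M.hitProb 𝔰 σ (A ∪ B) ≤ M.hitProb 𝔰 σ A + M.hitProb 𝔰 σ B := by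
  refine iSup_le fun k => ?_
  calc M.hitProbWithin 𝔰 σ (A ∪ B) k
      ≤ M.hitProbWithin 𝔰 σ A k + M.hitProbWithin 𝔰 σ B k :=
        hitProbAux_union_le M 𝔰 A B k [] σ
    _ ≤ M.hitProb 𝔰 σ A + M.hitProb 𝔰 σ B :=
        add_le_add (le_iSup _ k) (le_iSup _ k)

/-- **Soundness of the stochastic-invariant rule for lower bounds.** If `(Ψ, p)` is a
stochastic invariant for `σ` and, under every scheduler, the run almost surely either
visits the terminal state or leaves `Ψ`, then under every scheduler the probability of
visiting the terminal state is at least `1 - p`; in particular the termination probability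
is at least `1 - p`. -/
theorem lower_bound_rule_sound {S : Type} [Countable S] (M : MDP S) (term σ : S)
    (hterm : M.Absorbing term)
    (p : ℝ) (hp0 : 0 ≤ p) (hp1 : p ≤ 1)
    (Ψ : Set S) (hSI : M.StochasticInvariant σ Ψ p)
    (hAS : ∀ 𝔰 : Scheduler M, M.hitProb 𝔰 σ ({term} ∪ Ψᶜ) = 1) :
    (∀ 𝔰 : Scheduler M, ENNReal.ofReal (1 - p) ≤ M.hitProb 𝔰 σ {term}) ∧
    ENNReal.ofReal (1 - p) ≤ M.PrTerm term σ := by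
  have key : ∀ 𝔰 : Scheduler M, ENNReal.ofReal (1 - p) ≤ M.hitProb 𝔰 σ {term} := by
    intro 𝔰
    have h1 : (1 : ℝ≥0∞) ≤ M.hitProb 𝔰 σ {term} + M.hitProb 𝔰 σ Ψᶜ := by
      rw [← hAS 𝔰]; exact hitProb_union_le M 𝔰 σ {term} Ψᶜ
    have h2 : M.hitProb 𝔰 σ Ψᶜ ≤ ENNReal.ofReal p := le_trans (le_iSup (fun 𝔰 : Scheduler M => M.hitProb 𝔰 σ Ψᶜ) 𝔰) hSI
    have h3 : (1 : ℝ≥0∞) ≤ M.hitProb 𝔰 σ {term} + ENNReal.ofReal p :=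
      h1.trans (add_le_add_right h2 _)
    have h4 : (1 : ℝ≥0∞) - ENNReal.ofReal p ≤ M.hitProb 𝔰 σ {term} :=
      tsub_le_iff_right.mpr h3
    calc ENNReal.ofReal (1 - p) = ENNReal.ofReal 1 - ENNReal.ofReal p :=
          ENNReal.ofReal_sub 1 hp0
      _ = 1 - ENNReal.ofReal p := by rw [ENNReal.ofReal_one]
      _ ≤ _ := h4
  exact ⟨key, le_iInf key⟩
end

section
/- Counterexample to exact stochastic invariants: There exists a countable Markov chain with absorbing terminal state ⊥ and an initial state σ such that ℙ_σ(the run visits ⊥) = 1/2, yet there is no set Ψ of states satisfying both (a) ℙ_σ(some state of the run lies outside Ψ) ≤ 1/2 and (b) ℙ_σ(the run visits ⊥ or some state of the run lies outside Ψ) = 1. -/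
open scoped ENNReal Classical

/-- Probability that a countable Markov chain with transition function `P`, currently at
state `s`, visits the set `T` within the next `k` steps. -/
noncomputable def mcHitProbWithin {S : Type} (P : S → PMF S) (T : Set S) : ℕ → S → ℝ≥0∞
  | 0, s => if s ∈ T then 1 else 0
  | k + 1, s => if s ∈ T then 1 else ∑' s', P s s' * mcHitProbWithin P T k s'

/-- Probability that the Markov chain started at `σ` ever visits the set `T`. -/
noncomputable def mcHitProb {S : Type} (P : S → PMF S) (σ : S) (T : Set S) : ℝ≥0∞ :=
  ⨆ k, mcHitProbWithin P T k σ

namespace NoExactSI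

noncomputable def p (n : ℕ) : ℝ≥0∞ := 2⁻¹ + 2⁻¹ ^ (n + 1)

lemma p_ne_top (n : ℕ) : p n ≠ ⊤ := by
  simp [p]

lemma p_ne_zero (n : ℕ) : p n ≠ 0 := by
  simp [p]

lemma p_le_one (n : ℕ) : p n ≤ 1 := by
  unfold p
  have h : (2⁻¹ : ℝ≥0∞) ^ (n + 1) ≤ 2⁻¹ := by
    simpa using pow_le_pow_right_of_le_one' (a := (2⁻¹ : ℝ≥0∞)) (by norm_num)
      (Nat.one_le_iff_ne_zero.mpr (Nat.succ_ne_zero n))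
  calc 2⁻¹ + (2⁻¹ : ℝ≥0∞) ^ (n + 1) ≤ 2⁻¹ + 2⁻¹ := add_le_add_right h _
    _ = 1 := ENNReal.inv_two_add_inv_two

lemma p_zero : p 0 = 1 := by
  simp [p, ENNReal.inv_two_add_inv_two]

lemma p_anti : ∀ n, p (n + 1) ≤ p n := by
  intro n
  unfold p
  gcongr 2⁻¹ + ?_
  exact pow_le_pow_right_of_le_one' (by norm_num) (by omega)

lemma half_lt_p (n : ℕ) : 2⁻¹ < p n := by
  unfold p
  refine ENNReal.lt_add_right (by norm_num) (pow_ne_zero _ (by norm_num))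

noncomputable def a (n : ℕ) : ℝ≥0∞ := p (n + 1) / p n

lemma a_le_one (n : ℕ) : a n ≤ 1 :=
by
  rw [a, ENNReal.div_le_iff (p_ne_zero n) (p_ne_top n), one_mul]; exact p_anti n

lemma a_mul_div (n : ℕ) (x : ℝ≥0∞) : a n * (x / p (n + 1)) = x / p n := by
  rw [a, div_eq_mul_inv, div_eq_mul_inv, div_eq_mul_inv]
  rw [show p (n+1) * (p n)⁻¹ * (x * (p (n+1))⁻¹) = x * (p n)⁻¹ * (p (n+1) * (p (n+1))⁻¹) by ring]
  rw [ENNReal.mul_inv_cancel (p_ne_zero _) (p_ne_top _), mul_one]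

noncomputable def P : Option ℕ → PMF (Option ℕ)
  | none => PMF.pure none
  | some n => (PMF.bernoulli (a n).toNNReal
      (by have h := ENNReal.toNNReal_mono ENNReal.one_ne_top (a_le_one n)
          rwa [ENNReal.toNNReal_one] at h)).map
      (fun b => if b then some (n + 1) else none)

lemma P_none_apply (n : ℕ) : P (some n) none = 1 - a n := by
  simp [P, PMF.map_apply, tsum_bool, PMF.bernoulli_apply,
    ENNReal.coe_toNNReal (ne_top_of_le_ne_top ENNReal.one_ne_top (a_le_one n))]

lemma P_some_apply (n m : ℕ) : P (some n) (some m) = if m = n + 1 then a n else 0 := by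
  simp [P, PMF.map_apply, tsum_bool, PMF.bernoulli_apply, eq_comm,
    ENNReal.coe_toNNReal (ne_top_of_le_ne_top ENNReal.one_ne_top (a_le_one n))]

lemma step (n : ℕ) (g : Option ℕ → ℝ≥0∞) :
    ∑' s', P (some n) s' * g s' = (1 - a n) * g none + a n * g (some (n + 1)) := by
  rw [tsum_eq_sum (s := {none, some (n + 1)}) ?_]
  · simp [P_none_apply, P_some_apply]
  · intro s hs
    match s with
    | none => simp at hs
    | some m =>
      have : m ≠ n + 1 := by simpa using hs
      simp [P_some_apply, this]


lemma p_anti' : Antitone p := antitone_nat_of_succ_le p_anti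

lemma within_mem {T : Set (Option ℕ)} {s : Option ℕ} (hs : s ∈ T) (k : ℕ) :
    mcHitProbWithin P T k s = 1 := by
  cases k <;> simp [mcHitProbWithin, hs]

lemma within_term : ∀ (k n : ℕ),
    mcHitProbWithin P {none} k (some n) = 1 - p (n + k) / p n
  | 0, n => by
    simp only [mcHitProbWithin, Set.mem_singleton_iff, if_neg (Option.some_ne_none n)]
    rw [Nat.add_zero, ENNReal.div_self (p_ne_zero n) (p_ne_top n), tsub_self]
  | k + 1, n => by
    rw [show mcHitProbWithin P {none} (k+1) (some n)
        = ∑' s', P (some n) s' * mcHitProbWithin P {none} k s' by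
      simp [mcHitProbWithin]]
    rw [step, within_mem (T := {none}) rfl, within_term k (n + 1), mul_one]
    have hX : p (n + 1 + k) / p (n + 1) ≤ 1 := by
      rw [ENNReal.div_le_iff (p_ne_zero _) (p_ne_top _), one_mul]
      exact p_anti' (Nat.le_add_right _ _)
    have hane : a n ≠ ⊤ := (ENNReal.div_lt_top (p_ne_top _) (p_ne_zero _)).ne
    rw [ENNReal.mul_sub (a := a n) (fun _ _ => hane)]
    rw [mul_one, a_mul_div]
    have h2 : a n * (p (n + 1 + k) / p (n + 1)) ≤ a n := by
      calc a n * (p (n + 1 + k) / p (n + 1)) ≤ a n * 1 := mul_le_mul_right hX _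
        _ = a n := mul_one _
    rw [a_mul_div] at h2
    rw [tsub_add_tsub_cancel (a_le_one n) h2, show n + 1 + k = n + (k + 1) from by omega]

lemma hit_term : mcHitProb P (some 0) {none} = 2⁻¹ := by
  unfold mcHitProb
  have h1 : ∀ k, mcHitProbWithin P {none} k (some 0) = 1 - p k := by
    intro k
    rw [within_term k 0, Nat.zero_add, p_zero, div_one]
  simp_rw [h1]
  rw [← ENNReal.sub_iInf]
  have hinf : ⨅ k, p k = 2⁻¹ := by
    have ht : Filter.Tendsto p Filter.atTop (nhds (⨅ k, p k)) :=
      tendsto_atTop_iInf p_anti'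
    have ht2 : Filter.Tendsto p Filter.atTop (nhds 2⁻¹) := by
      have hp : Filter.Tendsto (fun k : ℕ => (2⁻¹ : ℝ≥0∞) ^ (k + 1)) Filter.atTop (nhds 0) :=
        (ENNReal.tendsto_pow_atTop_nhds_zero_of_lt_one (by norm_num)).comp
          (Filter.tendsto_add_atTop_nat 1)
      have := Filter.Tendsto.add (tendsto_const_nhds (x := (2⁻¹ : ℝ≥0∞))
        (f := Filter.atTop (α := ℕ))) hp
      rw [show p = fun n => 2⁻¹ + 2⁻¹ ^ (n + 1) from rfl]
      simpa using this
    exact tendsto_nhds_unique ht ht2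
  rw [hinf]
  rw [← ENNReal.inv_two_add_inv_two, ENNReal.add_sub_cancel_right (by norm_num)]

lemma reach_lb : ∀ (j m : ℕ) (T : Set (Option ℕ)), some (m + j) ∈ T →
    p (m + j) / p m ≤ mcHitProbWithin P T j (some m)
  | 0, m, T, hmem => by
    simp only [mcHitProbWithin, if_pos (by simpa using hmem)]
    rw [Nat.add_zero, ENNReal.div_self (p_ne_zero m) (p_ne_top m)]
  | j + 1, m, T, hmem => by
    by_cases hm : some m ∈ T
    · rw [within_mem hm]
      rw [ENNReal.div_le_iff (p_ne_zero _) (p_ne_top _), one_mul]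
      exact p_anti' (Nat.le_add_right _ _)
    · rw [show mcHitProbWithin P T (j+1) (some m)
          = ∑' s', P (some m) s' * mcHitProbWithin P T j s' by
        simp [mcHitProbWithin, hm]]
      rw [step]
      have ih : p (m + 1 + j) / p (m + 1) ≤ mcHitProbWithin P T j (some (m + 1)) :=
        reach_lb j (m + 1) T (by convert hmem using 2; omega)
      calc p (m + (j + 1)) / p m = a m * (p (m + 1 + j) / p (m + 1)) := by
            rw [a_mul_div, show m + (j + 1) = m + 1 + j from by omega]
        _ ≤ a m * mcHitProbWithin P T j (some (m + 1)) := mul_le_mul_right ih _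
        _ ≤ _ := le_add_self

end NoExactSI

/-- **Counterexample to exact stochastic invariants.** There is a countable Markov chain
with an absorbing terminal state `term` and an initial state `σ` whose termination
probability is exactly `1/2`, yet no set `Ψ` of states satisfies both (a) the probability
that the run ever leaves `Ψ` is at most `1/2`, and (b) the run almost surely either visits
`term` or leaves `Ψ`. -/
theorem no_exact_stochastic_invariant :
    ∃ (S : Type) (_ : Countable S) (P : S → PMF S) (term σ : S),
      P term = PMF.pure term ∧
      mcHitProb P σ {term} = 1 / 2 ∧
      ¬ ∃ Ψ : Set S,
          mcHitProb P σ Ψᶜ ≤ 1 / 2 ∧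
          mcHitProb P σ ({term} ∪ Ψᶜ) = 1 := by
  refine ⟨Option ℕ, inferInstance, NoExactSI.P, none, some 0, rfl, ?_, ?_⟩
  · rw [NoExactSI.hit_term, one_div]
  · rintro ⟨Ψ, ha, hb⟩
    by_cases hΨ : ∀ n, some n ∈ Ψ
    · have hsub : ({none} : Set (Option ℕ)) ∪ Ψᶜ = {none} := by
        apply Set.union_eq_self_of_subset_right
        intro s hs
        match s with
        | none => rfl
        | some n => exact absurd (hΨ n) hs
      rw [hsub, NoExactSI.hit_term] at hb
      simp at hb
    · push_neg at hΨ
      obtain ⟨n, hn⟩ := hΨ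
      have h1 := NoExactSI.reach_lb n 0 Ψᶜ (by simpa using hn)
      rw [Nat.zero_add, NoExactSI.p_zero, div_one] at h1
      have h2 : NoExactSI.p n ≤ 1 / 2 :=
        h1.trans ((le_iSup (mcHitProbWithin NoExactSI.P Ψᶜ · (some 0)) n).trans ha)
      rw [one_div] at h2
      exact absurd h2 (NoExactSI.half_lt_p n).not_ge
end

section
/- Completeness of the stochastic-invariant rule for AST: Let M be a finitely-branching MDP with absorbing terminal state ⊥ that is almost surely terminating from its initial state σ₀, and let p ∈ (0,1). Then for every σ ∈ Reach(σ₀) there exists a finite set Ψ_σ ⊆ S with σ ∈ Ψ_σ and ⊥ ∈ Ψ_σ such that (Ψ_σ, p) is a stochastic invariant for initial state σ and, for every scheduler 𝔰, ℙ_{𝔰,σ}(the run visits ⊥ or some state of the run lies outside Ψ_σ) = 1. -/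
open scoped ENNReal Classical

namespace MDPAux
open MDP

variable {S : Type} {M : MDP S}

lemma hitProbAux_le_one (𝔰 : Scheduler M) (T : Set S) :
    ∀ k hist s, M.hitProbAux 𝔰 T k hist s ≤ 1 := by
  intro k
  induction k with
  | zero => intro hist s; rw [hitProbAux]; split <;> simp
  | succ k ih =>
    intro hist s
    rw [hitProbAux]
    split
    · exact le_rfl
    · calc ∑' s', (𝔰.choose hist s) s' * M.hitProbAux 𝔰 T k (hist ++ [s]) s'
          ≤ ∑' s', (𝔰.choose hist s) s' * 1 :=
            ENNReal.tsum_le_tsum fun s' => mul_le_mul_right (ih _ _) _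
        _ = 1 := by simp [(𝔰.choose hist s).tsum_coe]

lemma hitProbAux_succ_le (𝔰 : Scheduler M) (T : Set S) :
    ∀ k hist s, M.hitProbAux 𝔰 T k hist s ≤ M.hitProbAux 𝔰 T (k+1) hist s := by
  intro k
  induction k with
  | zero =>
    intro hist s
    rw [hitProbAux, hitProbAux]
    split
    · exact le_rfl
    · exact zero_le
  | succ k ih =>
    intro hist s
    rw [hitProbAux]
    conv_rhs => rw [hitProbAux]
    split
    · exact le_rfl
    · exact ENNReal.tsum_le_tsum fun s' => mul_le_mul_right (ih _ _) _

lemma hitProbWithin_mono (𝔰 : Scheduler M) (σ : S) (T : Set S) :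
    Monotone (M.hitProbWithin 𝔰 σ T) :=
  monotone_nat_of_le_succ fun k => hitProbAux_succ_le 𝔰 T k [] σ

lemma hitProbAux_mono_set (𝔰 : Scheduler M) {T₁ T₂ : Set S} (h : T₁ ⊆ T₂) :
    ∀ k hist s, M.hitProbAux 𝔰 T₁ k hist s ≤ M.hitProbAux 𝔰 T₂ k hist s := by
  intro k
  induction k with
  | zero =>
    intro hist s
    rw [hitProbAux, hitProbAux]
    by_cases hs : s ∈ T₁
    · simp [hs, h hs]
    · simp [hs]
  | succ k ih =>
    intro hist s
    by_cases hs : s ∈ T₂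
    · calc M.hitProbAux 𝔰 T₁ (k+1) hist s ≤ 1 := hitProbAux_le_one 𝔰 T₁ _ _ _
        _ = M.hitProbAux 𝔰 T₂ (k+1) hist s := by rw [hitProbAux]; simp [hs]
    · have hs1 : s ∉ T₁ := fun hx => hs (h hx)
      rw [hitProbAux]
      conv_rhs => rw [hitProbAux]
      simp only [hs, hs1, if_false]
      exact ENNReal.tsum_le_tsum fun s' => mul_le_mul_right (ih _ _) _

lemma hitProb_le_one (𝔰 : Scheduler M) (σ : S) (T : Set S) : M.hitProb 𝔰 σ T ≤ 1 :=
  iSup_le fun k => hitProbAux_le_one 𝔰 T k [] σ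

lemma hitProb_of_mem (𝔰 : Scheduler M) {σ : S} {T : Set S} (h : σ ∈ T) :
    M.hitProb 𝔰 σ T = 1 := by
  refine le_antisymm (hitProb_le_one 𝔰 σ T) ?_
  refine le_iSup_of_le 0 ?_
  rw [hitProbWithin, hitProbAux]
  simp [h]

lemma choose_term {term : S} (hterm : M.Absorbing term) (𝔰 : Scheduler M) (hist : List S) :
    𝔰.choose hist term = PMF.pure term := by
  have := 𝔰.choose_mem hist term
  rw [Absorbing] at hterm
  rw [hterm] at this
  simpa using this

lemma hitProbAux_term_zero {term : S} (hterm : M.Absorbing term) (𝔰 : Scheduler M)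
    {T : Set S} (hT : term ∉ T) :
    ∀ k hist, M.hitProbAux 𝔰 T k hist term = 0 := by
  intro k
  induction k with
  | zero => intro hist; rw [hitProbAux]; simp [hT]
  | succ k ih =>
    intro hist
    rw [hitProbAux]
    simp only [hT, if_false]
    rw [choose_term hterm]
    rw [tsum_eq_single term (fun b hb => by simp [PMF.pure_apply, hb])]
    simp [PMF.pure_apply, ih]

end MDPAux

namespace MDPAux
open MDP

variable {S : Type} {M : MDP S}

lemma step_ast {term : S} (hterm : M.Absorbing term) {s s' : S} (μ : PMF S)
    (hμ : μ ∈ M.act s) (hs' : s' ∈ μ.support)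
    (hall : ∀ 𝔰 : Scheduler M, M.hitProb 𝔰 s {term} = 1) :
    ∀ 𝔰 : Scheduler M, M.hitProb 𝔰 s' {term} = 1 := by
  intro 𝔰
  classical
  by_cases hst : s = term
  · subst hst
    have hμ' : μ = PMF.pure s := by
      rw [Absorbing] at hterm; rw [hterm] at hμ; simpa using hμ
    have hs'' : s' = s := by
      rw [hμ'] at hs'; simpa using hs'
    subst hs''
    exact hall 𝔰
  -- build the scheduler from s that first plays μ, then mimics 𝔰
  · set 𝔰' : Scheduler M :=
      { choose := fun hist t =>
          if hist = [] then (if h : μ ∈ M.act t then μ else (M.act_nonempty t).choose)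
          else 𝔰.choose hist.tail t
        choose_mem := fun hist t => by
          show (if hist = [] then (if h : μ ∈ M.act t then μ else (M.act_nonempty t).choose)
            else 𝔰.choose hist.tail t) ∈ M.act t
          split
          · split
            · assumption
            · exact (M.act_nonempty t).choose_spec
          · exact 𝔰.choose_mem _ _ } with h𝔰'
    have hshift : ∀ (T : Set S) k hist t,
        M.hitProbAux 𝔰' T k (s :: hist) t = M.hitProbAux 𝔰 T k hist t := by
      intro T k
      induction k with
      | zero => intro hist t; rw [hitProbAux, hitProbAux]
      | succ k ih =>
        intro hist t
        rw [hitProbAux]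
        conv_rhs => rw [hitProbAux]
        have hch : 𝔰'.choose (s :: hist) t = 𝔰.choose hist t := by
          simp [h𝔰']
        rw [hch]
        split
        · rfl
        · refine tsum_congr fun u => ?_
          rw [show (s :: hist) ++ [t] = s :: (hist ++ [t]) from rfl, ih]
    set b : ℝ≥0∞ := M.hitProb 𝔰 s' {term} with hb
    have hb1 : b ≤ 1 := hitProb_le_one 𝔰 s' {term}
    set r : ℝ≥0∞ := 1 - b with hr
    have key : ∀ K, M.hitProbAux 𝔰' {term} K [] s + μ s' * r ≤ 1 := by
      intro K
      have hmur : μ s' * r ≤ 1 := by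
        calc μ s' * r ≤ 1 * 1 := mul_le_mul' ((μ.coe_le_one s')) (tsub_le_self.trans le_rfl)
          _ = 1 := one_mul 1
      cases K with
      | zero =>
        rw [hitProbAux, if_neg (by simpa using hst)]
        simpa using hmur
      | succ K =>
        have hch : 𝔰'.choose [] s = μ := by simp [h𝔰', hμ]
        rw [hitProbAux, if_neg (by simpa using hst), hch]
        have hsh : ∀ u, M.hitProbAux 𝔰' {term} K ([] ++ [s]) u
            = M.hitProbAux 𝔰 {term} K [] u := fun u => hshift {term} K [] u
        calc (∑' u, μ u * M.hitProbAux 𝔰' {term} K ([] ++ [s]) u) + μ s' * r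
            = (∑' u, μ u * M.hitProbAux 𝔰 {term} K [] u) + μ s' * r := by
              rw [tsum_congr fun u => by rw [hsh u]]
          _ = (μ s' * M.hitProbAux 𝔰 {term} K [] s'
                + ∑' u, if u = s' then 0 else μ u * M.hitProbAux 𝔰 {term} K [] u)
                + μ s' * r := by
              rw [ENNReal.tsum_eq_add_tsum_ite s']
          _ = μ s' * (M.hitProbAux 𝔰 {term} K [] s' + r)
                + ∑' u, if u = s' then 0 else μ u * M.hitProbAux 𝔰 {term} K [] u := by
              ring
          _ ≤ μ s' * 1 + ∑' u, if u = s' then 0 else μ u := by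
              gcongr with u
              · calc M.hitProbAux 𝔰 {term} K [] s' + r
                    ≤ b + (1 - b) := by
                      gcongr
                      exact le_iSup (fun k => M.hitProbWithin 𝔰 s' {term} k) K
                  _ = 1 := by rw [add_comm]; exact tsub_add_cancel_of_le hb1
              · split
                · exact le_rfl
                · exact mul_le_of_le_one_right zero_le (hitProbAux_le_one 𝔰 {term} K [] u)
          _ = μ s' + ∑' u, if u = s' then 0 else μ u := by rw [mul_one]
          _ = ∑' u, μ u := (ENNReal.tsum_eq_add_tsum_ite s').symm
          _ = 1 := μ.tsum_coe
    -- conclude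
    have h1 : M.hitProb 𝔰' s {term} + μ s' * r ≤ 1 := by
      rw [hitProb, ENNReal.iSup_add]
      exact iSup_le fun K => key K
    rw [hall 𝔰'] at h1
    have h0 : μ s' * r ≤ 0 := by
      have := ENNReal.le_of_add_le_add_left (by simp : (1:ℝ≥0∞) ≠ ∞)
        (by simpa using h1 : 1 + μ s' * r ≤ 1 + 0)
      simpa using this
    have hr0 : r = 0 := by
      rcases mul_eq_zero.mp (le_antisymm h0 zero_le) with h | h
      · exact absurd h hs'
      · exact h
    have : (1:ℝ≥0∞) ≤ b := by
      rwa [hr, tsub_eq_zero_iff_le] at hr0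
    exact le_antisymm hb1 this

end MDPAux

namespace MDPAux
open MDP

variable {S : Type}

lemma reach_term_prob {M : MDP S} {term σ₀ : S} (hterm : M.Absorbing term)
    (hAST : M.AST term σ₀) :
    ∀ σ, M.Reach σ₀ σ → ∀ 𝔰 : Scheduler M, M.hitProb 𝔰 σ {term} = 1 := by
  intro σ h
  induction h with
  | refl =>
    intro 𝔰
    refine le_antisymm (hitProb_le_one _ _ _) ?_
    have h2 := iInf_le (fun 𝔰 : Scheduler M => M.hitProb 𝔰 σ₀ {term}) 𝔰
    rw [AST, PrTerm] at hAST
    rw [hAST] at h2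
    exact h2
  | step μ hr hμ hs ih => exact step_ast hterm μ hμ hs ih

/-- The (finite, discrete) type of available actions at a state. -/
def Choice (M : MDP S) (t : S) : Type := {μ : PMF S // μ ∈ M.act t}

instance (M : MDP S) (t : S) : TopologicalSpace (Choice M t) := ⊥
instance (M : MDP S) (t : S) : DiscreteTopology (Choice M t) := ⟨rfl⟩
instance (M : MDP S) (t : S) : Finite (Choice M t) :=
  inferInstanceAs (Finite {μ : PMF S // μ ∈ M.act t})
instance (M : MDP S) (t : S) : Nonempty (Choice M t) := by
  obtain ⟨μ, hμ⟩ := M.act_nonempty t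
  exact ⟨⟨μ, hμ⟩⟩

/-- Schedulers as a product of finite discrete choice sets. -/
abbrev SchedT (M : MDP S) := ∀ hs : List S × S, Choice M hs.2

noncomputable def ofT (M : MDP S) (f : SchedT M) : Scheduler M :=
  ⟨fun hist t => (f (hist, t)).1, fun hist t => (f (hist, t)).2⟩

lemma cont_aux (M : MDP S) (T : Set S) : ∀ (k : ℕ) (hist : List S) (t : S),
    Continuous fun f : SchedT M => M.hitProbAux (ofT M f) T k hist t := by
  intro k
  induction k with
  | zero =>
    intro hist t
    have h : (fun f : SchedT M => M.hitProbAux (ofT M f) T 0 hist t)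
        = fun _ => if t ∈ T then 1 else 0 := funext fun f => by rw [hitProbAux]
    rw [h]
    exact continuous_const
  | succ k ih =>
    intro hist t
    by_cases ht : t ∈ T
    · have h : (fun f : SchedT M => M.hitProbAux (ofT M f) T (k+1) hist t)
          = fun _ => 1 := funext fun f => by rw [hitProbAux, if_pos ht]
      rw [h]
      exact continuous_const
    · rw [continuous_iff_continuousAt]
      intro f₀
      set v := f₀ (hist, t) with hv
      have hfin := M.act_finSupp t v.1 v.2
      have hg : Continuous fun f : SchedT M =>
          ∑ u ∈ hfin.toFinset, (v.1 : PMF S) u * M.hitProbAux (ofT M f) T k (hist ++ [t]) u := by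
        refine continuous_finset_sum _ fun u _ => ?_
        have hne : (v.1 : PMF S) u ≠ ∞ :=
          ne_top_of_le_ne_top ENNReal.one_ne_top ((v.1 : PMF S).coe_le_one u)
        exact (ENNReal.continuous_const_mul hne).comp (ih (hist ++ [t]) u)
      have hU : IsOpen {f : SchedT M | f (hist, t) = v} := by
        have h : {f : SchedT M | f (hist, t) = v} = (fun f : SchedT M => f (hist, t)) ⁻¹' {v} := rfl
        rw [h]
        exact (continuous_apply (hist, t)).isOpen_preimage _ (isOpen_discrete _)
      refine ContinuousAt.congr hg.continuousAt ?_
      refine Filter.eventuallyEq_of_mem (hU.mem_nhds (by exact rfl)) ?_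
      intro f hf
      show _ = M.hitProbAux (ofT M f) T (k+1) hist t
      symm
      rw [hitProbAux, if_neg ht]
      have hch : (ofT M f).choose hist t = (v.1 : PMF S) := congrArg Subtype.val hf
      rw [hch]
      refine tsum_eq_sum fun u hu => ?_
      have h0 : (v.1 : PMF S) u = 0 := by
        by_contra h0
        exact hu (hfin.mem_toFinset.mpr h0)
      rw [h0, zero_mul]

lemma exists_uniform (M : MDP S) (σ term : S)
    (hall : ∀ 𝔰 : Scheduler M, M.hitProb 𝔰 σ {term} = 1) {c : ℝ≥0∞} (hc : c < 1) :
    ∃ n, ∀ 𝔰 : Scheduler M, c ≤ M.hitProbWithin 𝔰 σ {term} n := by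
  by_contra hcon
  push_neg at hcon
  set F : ℕ → Set (SchedT M) :=
    fun n => (fun f : SchedT M => M.hitProbAux (ofT M f) {term} n [] σ) ⁻¹' Set.Iic c with hF
  have hne : ∀ n, (F n).Nonempty := by
    intro n
    obtain ⟨𝔰, h𝔰⟩ := hcon n
    refine ⟨fun hs => ⟨𝔰.choose hs.1 hs.2, 𝔰.choose_mem hs.1 hs.2⟩, ?_⟩
    have heq : ofT M (fun hs => ⟨𝔰.choose hs.1 hs.2, 𝔰.choose_mem hs.1 hs.2⟩) = 𝔰 := rfl
    show M.hitProbAux _ {term} n [] σ ≤ c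
    rw [heq]
    exact le_of_lt h𝔰
  have hclosed : ∀ n, IsClosed (F n) := fun n =>
    IsClosed.preimage (cont_aux M {term} n [] σ) isClosed_Iic
  have hanti : ∀ m n, m ≤ n → F n ⊆ F m := by
    intro m n hmn f hf
    exact le_trans (hitProbWithin_mono (ofT M f) σ {term} hmn) hf
  have hdir : Directed (· ⊇ ·) F := fun m n =>
    ⟨max m n, hanti m _ (le_max_left m n), hanti n _ (le_max_right m n)⟩
  obtain ⟨f, hf⟩ := IsCompact.nonempty_iInter_of_directed_nonempty_isCompact_isClosed F hdir
    hne (fun n => (hclosed n).isCompact) hclosed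
  have hle : M.hitProb (ofT M f) σ {term} ≤ c :=
    iSup_le fun n => Set.mem_iInter.mp hf n
  rw [hall (ofT M f)] at hle
  exact absurd (hle.trans_lt hc) (lt_irrefl _)

end MDPAux

namespace MDPAux
open MDP

variable {S : Type}

/-- States reachable from `σ` within `n` steps. -/
def RS (M : MDP S) (σ : S) : ℕ → Set S
  | 0 => {σ}
  | n+1 => RS M σ n ∪ ⋃ s ∈ RS M σ n, ⋃ μ ∈ M.act s, (μ : PMF S).support

lemma RS_finite (M : MDP S) (σ : S) : ∀ n, (RS M σ n).Finite
  | 0 => Set.finite_singleton σ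
  | n+1 => by
    refine (RS_finite M σ n).union ?_
    refine (RS_finite M σ n).biUnion fun s _ => ?_
    refine Set.Finite.biUnion ((M.act s).finite_toSet) fun μ hμ => M.act_finSupp s μ hμ

lemma RS_mono (M : MDP S) (σ : S) : Monotone (RS M σ) := by
  refine monotone_nat_of_le_succ fun n => ?_
  rw [RS]
  exact Set.subset_union_left

lemma RS_step (M : MDP S) (σ : S) {j : ℕ} {s u : S} {μ : PMF S}
    (hs : s ∈ RS M σ j) (hμ : μ ∈ M.act s) (hu : u ∈ μ.support) :
    u ∈ RS M σ (j+1) := by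
  rw [RS]
  exact Or.inr (Set.mem_biUnion hs (Set.mem_biUnion hμ hu))

lemma claimA {M : MDP S} {term : S} (σ : S) (hterm : M.Absorbing term) (n : ℕ)
    (𝔰 : Scheduler M) :
    ∀ (k m j : ℕ) (hist : List S) (s : S), j + m ≤ n → (s ∈ RS M σ j ∨ s = term) →
      M.hitProbAux 𝔰 (RS M σ n ∪ {term})ᶜ k hist s
        + M.hitProbAux 𝔰 {term} m hist s ≤ 1 := by
  set Ψ : Set S := RS M σ n ∪ {term} with hΨ
  have htermΨ : term ∈ Ψ := Or.inr rfl
  have hmemΨ : ∀ {j s}, j ≤ n → (s ∈ RS M σ j ∨ s = term) → s ∈ Ψ := by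
    intro j s hj hs
    rcases hs with h | h
    · exact Or.inl (RS_mono M σ hj h)
    · rw [h]; exact htermΨ
  intro k
  induction k with
  | zero =>
    intro m j hist s hjm hs
    have hsΨ : s ∈ Ψ := hmemΨ (by omega) hs
    have h1 : M.hitProbAux 𝔰 Ψᶜ 0 hist s = 0 := by
      rw [hitProbAux]; simp [hsΨ]
    rw [h1, zero_add]
    exact hitProbAux_le_one 𝔰 {term} m hist s
  | succ k ih =>
    intro m j hist s hjm hs
    have hsΨ : s ∈ Ψ := hmemΨ (by omega) hs
    have hsc : s ∉ Ψᶜ := Set.notMem_compl_iff.mpr hsΨ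
    by_cases hst : s = term
    · have h1 : M.hitProbAux 𝔰 Ψᶜ (k+1) hist s = 0 := by
        rw [hst]
        exact hitProbAux_term_zero hterm 𝔰 (Set.notMem_compl_iff.mpr htermΨ) (k+1) hist
      rw [h1, zero_add]
      exact hitProbAux_le_one 𝔰 {term} m hist s
    · have hsR : s ∈ RS M σ j := hs.resolve_right hst
      cases m with
      | zero =>
        have h2 : M.hitProbAux 𝔰 {term} 0 hist s = 0 := by
          rw [hitProbAux]; simp [hst]
        rw [h2, add_zero]
        exact hitProbAux_le_one 𝔰 Ψᶜ (k+1) hist s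
      | succ m =>
        have h1 : M.hitProbAux 𝔰 Ψᶜ (k+1) hist s
            = ∑' u, (𝔰.choose hist s) u * M.hitProbAux 𝔰 Ψᶜ k (hist ++ [s]) u := by
          rw [hitProbAux, if_neg hsc]
        have h2 : M.hitProbAux 𝔰 {term} (m+1) hist s
            = ∑' u, (𝔰.choose hist s) u * M.hitProbAux 𝔰 {term} m (hist ++ [s]) u := by
          rw [hitProbAux, if_neg (by simpa using hst)]
        rw [h1, h2, ← ENNReal.tsum_add]
        calc ∑' u, ((𝔰.choose hist s) u * M.hitProbAux 𝔰 Ψᶜ k (hist ++ [s]) u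
              + (𝔰.choose hist s) u * M.hitProbAux 𝔰 {term} m (hist ++ [s]) u)
            = ∑' u, (𝔰.choose hist s) u * (M.hitProbAux 𝔰 Ψᶜ k (hist ++ [s]) u
              + M.hitProbAux 𝔰 {term} m (hist ++ [s]) u) :=
              tsum_congr fun u => (mul_add _ _ _).symm
          _ ≤ ∑' u, (𝔰.choose hist s) u * 1 := by
              refine ENNReal.tsum_le_tsum fun u => ?_
              by_cases hνu : (𝔰.choose hist s) u = 0
              · simp [hνu]
              · refine mul_le_mul_right ?_ _
                have huR : u ∈ RS M σ (j+1) :=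
                  RS_step M σ hsR (𝔰.choose_mem hist s) hνu
                exact ih m (j+1) (hist ++ [s]) u (by omega) (Or.inl huR)
          _ = 1 := by simp [(𝔰.choose hist s).tsum_coe]

end MDPAux

/-- **Completeness of the stochastic-invariant rule for AST.** If `M` is almost surely
terminating from its initial state `σ₀` and `p ∈ (0,1)`, then for every state `σ` reachable
from `σ₀` there is a finite set `Ψ` containing `σ` and the terminal state such that
`(Ψ, p)` is a stochastic invariant for initial state `σ` and, under every scheduler, the
run started at `σ` almost surely either visits the terminal state or leaves `Ψ`. -/
theorem si_rule_for_ast_complete {S : Type} [Countable S] (M : MDP S) (term σ₀ : S)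
    (hterm : M.Absorbing term) (hAST : M.AST term σ₀)
    (p : ℝ) (hp0 : 0 < p) (hp1 : p < 1) :
    ∀ σ : S, M.Reach σ₀ σ → ∃ Ψ : Set S, Ψ.Finite ∧ σ ∈ Ψ ∧ term ∈ Ψ ∧
      M.StochasticInvariant σ Ψ p ∧
      ∀ 𝔰 : Scheduler M, M.hitProb 𝔰 σ ({term} ∪ Ψᶜ) = 1 := by

  intro σ hreach
  classical
  have hall : ∀ 𝔰 : Scheduler M, M.hitProb 𝔰 σ {term} = 1 :=
    MDPAux.reach_term_prob hterm hAST σ hreach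
  set q : ℝ≥0∞ := ENNReal.ofReal p with hq
  have hq0 : q ≠ 0 := by simp [hq, ENNReal.ofReal_eq_zero, not_le, hp0]
  have hq1 : q ≤ 1 := by rw [hq]; exact ENNReal.ofReal_le_one.mpr hp1.le
  have hc : (1 : ℝ≥0∞) - q < 1 := ENNReal.sub_lt_self ENNReal.one_ne_top one_ne_zero hq0
  obtain ⟨n, hn⟩ := MDPAux.exists_uniform M σ term hall hc
  have hσ0 : σ ∈ MDPAux.RS M σ 0 := rfl
  refine ⟨MDPAux.RS M σ n ∪ {term}, ?_, ?_, ?_, ?_, ?_⟩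
  · exact (MDPAux.RS_finite M σ n).union (Set.finite_singleton term)
  · exact Or.inl (MDPAux.RS_mono M σ (Nat.zero_le n) hσ0)
  · exact Or.inr rfl
  · rw [MDP.StochasticInvariant]
    refine iSup_le fun 𝔰 => ?_
    rw [MDP.hitProb]
    refine iSup_le fun k => ?_
    have hA := MDPAux.claimA σ hterm n 𝔰 k n 0 [] σ (by omega) (Or.inl hσ0)
    have h2 : (1:ℝ≥0∞) - q ≤ M.hitProbAux 𝔰 {term} n [] σ := hn 𝔰
    have h3 : M.hitProbAux 𝔰 (MDPAux.RS M σ n ∪ {term})ᶜ k [] σ + (1 - q) ≤ 1 :=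
      le_trans (add_le_add_right h2 _) hA
    have h4 := ENNReal.le_sub_of_add_le_right
      (ne_top_of_le_ne_top ENNReal.one_ne_top tsub_le_self) h3
    rwa [ENNReal.sub_sub_cancel ENNReal.one_ne_top hq1] at h4
  · intro 𝔰
    refine le_antisymm (MDPAux.hitProb_le_one 𝔰 σ _) ?_
    have hmono : M.hitProb 𝔰 σ {term} ≤ M.hitProb 𝔰 σ ({term} ∪ (MDPAux.RS M σ n ∪ {term})ᶜ) :=
      iSup_mono fun k => MDPAux.hitProbAux_mono_set 𝔰 Set.subset_union_left k [] σ
    rw [hall 𝔰] at hmono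
    exact hmono
end
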